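/- arXiv:1808.06082 — 3 statements merged into one kernel-verified Lean document; each statement's English description precedes it below -/
import Mathlib

section
/- Let T be a binary tree with μ([T]) > 0 and suppose σ ∈ T satisfies μ([T_σ]) > (1 − ε) · 2^{-|σ|} with ε < 1/2. Then there exist two incomparable extensions τ₀ and τ₁ of σ in T such that μ([T_{τ_i}]) > (1 − ε) · 2^{-|τ_i|} for i = 0, 1. -/
open MeasureTheory

/-- The length-`n` initial segment of `X ∈ 2^ω` as a finite binary string. -/
def initSeg (X : ℕ → Bool) (n : ℕ) : List Bool := List.ofFn fun i : Fin n => X i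

/-- A binary tree: a set of finite binary strings closed under initial segments. -/
def IsTree (T : Set (List Bool)) : Prop := ∀ σ ∈ T, ∀ τ : List Bool, τ <+: σ → τ ∈ T

/-- `[T]`: the set of infinite paths through `T`. -/
def paths (T : Set (List Bool)) : Set (ℕ → Bool) := {X | ∀ n, initSeg X n ∈ T}

/-- `T_σ`: the nodes of `T` comparable with `σ`. -/
def subtree (T : Set (List Bool)) (σ : List Bool) : Set (List Bool) :=
  {τ ∈ T | τ <+: σ ∨ σ <+: τ}

/-- `T ∩ 2^n`: the strings of length `n` in `T`. -/
def level (T : Set (List Bool)) (n : ℕ) : Set (List Bool) := {σ ∈ T | σ.length = n}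

/-- The basic cylinder determined by the string `σ`. -/
def cyl (σ : List Bool) : Set (ℕ → Bool) := {X | initSeg X σ.length = σ}

/-- `μ` is the uniform (coin-flipping) measure on Cantor space:
`μ([σ]) = 2^{-|σ|}` for every string `σ`. -/
def UniformOnCantor (μ : Measure (ℕ → Bool)) : Prop :=
  ∀ σ : List Bool, μ (cyl σ) = (2 : ENNReal)⁻¹ ^ σ.length

/-- A perfect tree: nonempty and every node has two incomparable extensions in the tree. -/
def IsPerfectTree (T : Set (List Bool)) : Prop :=
  T.Nonempty ∧ ∀ σ ∈ T, ∃ τ₀ ∈ T, ∃ τ₁ ∈ T,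
    σ <+: τ₀ ∧ σ <+: τ₁ ∧ ¬ τ₀ <+: τ₁ ∧ ¬ τ₁ <+: τ₀

lemma initSeg_length (X : ℕ → Bool) (n : ℕ) : (initSeg X n).length = n := by
  simp [initSeg]

lemma initSeg_succ (X : ℕ → Bool) (n : ℕ) :
    initSeg X (n+1) = initSeg X n ++ [X n] := by
  rw [initSeg, List.ofFn_succ', List.concat_eq_append]
  simp [initSeg]

lemma initSeg_prefix (X : ℕ → Bool) {m n : ℕ} (h : m ≤ n) :
    initSeg X m <+: initSeg X n := by
  induction n, h using Nat.le_induction with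
  | base => exact List.prefix_rfl
  | succ n h ih => exact ih.trans (by rw [initSeg_succ]; exact List.prefix_append _ _)

instance : MeasurableSpace (List Bool) := ⊤
instance : MeasurableSingletonClass (List Bool) := ⟨fun _ => trivial⟩

lemma measurableSet_cyl (σ : List Bool) : MeasurableSet (cyl σ) := by
  induction σ using List.reverseRecOn with
  | nil =>
      have : cyl ([] : List Bool) = Set.univ := by
        ext X; simp [cyl, initSeg]
      rw [this]; exact MeasurableSet.univ
  | append_singleton l b ih =>
      have : cyl (l ++ [b]) = cyl l ∩ {X : ℕ → Bool | X l.length = b} := by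
        ext X
        simp only [cyl, Set.mem_inter_iff, Set.mem_setOf_eq, List.length_append,
          List.length_singleton, initSeg_succ]
        constructor
        · intro h
          obtain ⟨h1, h2⟩ := List.append_inj h (by rw [initSeg_length])
          exact ⟨h1, by simpa using h2⟩
        · rintro ⟨h1, h2⟩; rw [h1, h2]
      rw [this]
      have h2 : {X : ℕ → Bool | X l.length = b} = (fun X : ℕ → Bool => X l.length) ⁻¹' {b} := rfl
      exact ih.inter (h2 ▸ (measurable_pi_apply l.length) (measurableSet_singleton b))

lemma measurable_initSeg (n : ℕ) : Measurable fun X : ℕ → Bool => initSeg X n := by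
  apply measurable_to_countable'
  intro σ
  by_cases h : σ.length = n
  · have : (fun X : ℕ → Bool => initSeg X n) ⁻¹' {σ} = cyl σ := by
      ext X; simp [cyl, h]
    rw [this]; exact measurableSet_cyl σ
  · have : (fun X : ℕ → Bool => initSeg X n) ⁻¹' {σ} = ∅ := by
      ext X
      simp only [Set.mem_preimage, Set.mem_singleton_iff, Set.mem_empty_iff_false, iff_false]
      intro hc; exact h (by rw [← hc, initSeg_length])
    rw [this]
    exact MeasurableSet.empty

lemma measurableSet_paths (S : Set (List Bool)) : MeasurableSet (paths S) := by
  have h : paths S = ⋂ n, (fun X : ℕ → Bool => initSeg X n) ⁻¹' S := by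
    ext X; simp [paths]
  rw [h]
  exact MeasurableSet.iInter fun n => measurable_initSeg n trivial

lemma mem_paths_subtree {T : Set (List Bool)} {ρ : List Bool} {X : ℕ → Bool} :
    X ∈ paths (subtree T ρ) ↔ (∀ n, initSeg X n ∈ T) ∧ initSeg X ρ.length = ρ := by
  constructor
  · intro h
    refine ⟨fun n => (h n).1, ?_⟩
    rcases (h ρ.length).2 with h1 | h1
    · exact h1.eq_of_length (initSeg_length X ρ.length)
    · exact (h1.eq_of_length (initSeg_length X ρ.length).symm).symm
  · rintro ⟨h1, h2⟩ n
    refine ⟨h1 n, ?_⟩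
    rcases le_total n ρ.length with h | h
    · exact Or.inl (h2 ▸ initSeg_prefix X h)
    · exact Or.inr (h2 ▸ initSeg_prefix X h)

lemma paths_subtree_split (T : Set (List Bool)) (τ : List Bool) :
    paths (subtree T τ) =
      paths (subtree T (τ ++ [false])) ∪ paths (subtree T (τ ++ [true])) := by
  ext X
  simp only [Set.mem_union, mem_paths_subtree, List.length_append, List.length_singleton]
  constructor
  · rintro ⟨h1, h2⟩
    cases hb : X τ.length
    · exact Or.inl ⟨h1, by rw [initSeg_succ, h2, hb]⟩
    · exact Or.inr ⟨h1, by rw [initSeg_succ, h2, hb]⟩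
  · rintro (⟨h1, h2⟩ | ⟨h1, h2⟩) <;>
    · refine ⟨h1, ?_⟩
      have h3 := (initSeg_succ X τ.length).symm.trans h2
      exact (List.append_inj h3 (by rw [initSeg_length])).1

lemma paths_subtree_disj (T : Set (List Bool)) (τ : List Bool) :
    Disjoint (paths (subtree T (τ ++ [false]))) (paths (subtree T (τ ++ [true]))) := by
  rw [Set.disjoint_left]
  intro X h0 h1
  have e0 := (mem_paths_subtree.mp h0).2
  have e1 := (mem_paths_subtree.mp h1).2
  have e0' : initSeg X (τ.length + 1) = τ ++ [false] := by simpa using e0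
  have e1' : initSeg X (τ.length + 1) = τ ++ [true] := by simpa using e1
  have := e0'.symm.trans e1'
  simp at this

lemma measure_paths_subtree_le (μ : Measure (ℕ → Bool)) (hμ : UniformOnCantor μ)
    (T : Set (List Bool)) (τ : List Bool) :
    μ (paths (subtree T τ)) ≤ (2 : ENNReal)⁻¹ ^ τ.length := by
  calc μ (paths (subtree T τ)) ≤ μ (cyl τ) :=
        measure_mono fun X hX => (mem_paths_subtree.mp hX).2
    _ = _ := hμ τ

lemma measure_paths_subtree_split (μ : Measure (ℕ → Bool)) (T : Set (List Bool)) (τ : List Bool) :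
    μ (paths (subtree T τ)) =
      μ (paths (subtree T (τ ++ [false]))) + μ (paths (subtree T (τ ++ [true]))) := by
  rw [paths_subtree_split T τ]
  exact measure_union (paths_subtree_disj T τ) (measurableSet_paths _)

lemma node_mem_of_measure_pos {μ : Measure (ℕ → Bool)} {T : Set (List Bool)} {ρ : List Bool}
    (h : 0 < μ (paths (subtree T ρ))) : ρ ∈ T := by
  obtain ⟨X, hX⟩ := MeasureTheory.nonempty_of_measure_ne_zero h.ne'
  obtain ⟨h1, h2⟩ := mem_paths_subtree.mp hX
  exact h2 ▸ h1 ρ.length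

/-- If `σ ∈ T` has density `> 1 - ε` with `ε < 1/2`, then `σ` has two incomparable
extensions in `T` of density `> 1 - ε`. -/
theorem stmt7 (μ : Measure (ℕ → Bool)) (hμ : UniformOnCantor μ)
    (T : Set (List Bool)) (hT : IsTree T) (hpos : 0 < μ (paths T))
    (ε : ℝ) (hε : ε < 1 / 2) (σ : List Bool) (hσ : σ ∈ T)
    (hd : ENNReal.ofReal ((1 - ε) * (2 : ℝ)⁻¹ ^ σ.length) < μ (paths (subtree T σ))) :
    ∃ τ₀ ∈ T, ∃ τ₁ ∈ T, σ <+: τ₀ ∧ σ <+: τ₁ ∧ ¬ τ₀ <+: τ₁ ∧ ¬ τ₁ <+: τ₀ ∧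
      ENNReal.ofReal ((1 - ε) * (2 : ℝ)⁻¹ ^ τ₀.length) < μ (paths (subtree T τ₀)) ∧
      ENNReal.ofReal ((1 - ε) * (2 : ℝ)⁻¹ ^ τ₁.length) < μ (paths (subtree T τ₁)) := by
  by_contra hcon
  push_neg at hcon
  have hε' : (0:ℝ) < 1 - ε := by linarith
  -- at every extension of σ, one of the two children has small measure
  have key : ∀ τ : List Bool, ∃ b : Bool, σ <+: τ →
      μ (paths (subtree T (τ ++ [b]))) ≤
        ENNReal.ofReal ((1 - ε) * (2:ℝ)⁻¹ ^ (τ.length + 1)) := by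
    intro τ
    by_cases hb0 : μ (paths (subtree T (τ ++ [false]))) ≤
        ENNReal.ofReal ((1 - ε) * (2:ℝ)⁻¹ ^ (τ.length + 1))
    · exact ⟨false, fun _ => hb0⟩
    · refine ⟨true, fun hpre => ?_⟩
      by_contra hb1
      push_neg at hb0 hb1
      have hpos0 : 0 < μ (paths (subtree T (τ ++ [false]))) :=
        lt_of_le_of_lt zero_le hb0
      have hpos1 : 0 < μ (paths (subtree T (τ ++ [true]))) :=
        lt_of_le_of_lt zero_le hb1
      have ht0 : τ ++ [false] ∈ T := node_mem_of_measure_pos hpos0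
      have ht1 : τ ++ [true] ∈ T := node_mem_of_measure_pos hpos1
      have hpre0 : σ <+: τ ++ [false] := hpre.trans (List.prefix_append _ _)
      have hpre1 : σ <+: τ ++ [true] := hpre.trans (List.prefix_append _ _)
      have hinc0 : ¬ (τ ++ [false]) <+: (τ ++ [true]) := by
        intro h
        have := h.eq_of_length (by simp)
        simp at this
      have hinc1 : ¬ (τ ++ [true]) <+: (τ ++ [false]) := by
        intro h
        have := h.eq_of_length (by simp)
        simp at this
      have hlen0 : ((τ ++ [false]) : List Bool).length = τ.length + 1 := by simp
      have hlen1 : ((τ ++ [true]) : List Bool).length = τ.length + 1 := by simp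
      have := hcon (τ ++ [false]) ht0 (τ ++ [true]) ht1 hpre0 hpre1 hinc0 hinc1
        (by rw [hlen0]; exact hb0)
      rw [hlen1] at this
      exact absurd hb1 (not_lt.mpr this)
  choose bs hbs using key
  -- the chain along the big children
  let f : ℕ → List Bool := fun n => Nat.rec σ (fun _ τ => τ ++ [!(bs τ)]) n
  have hf0 : f 0 = σ := rfl
  have hfs : ∀ n, f (n+1) = f n ++ [!(bs (f n))] := fun n => rfl
  have hpre : ∀ n, σ <+: f n := by
    intro n
    induction n with
    | zero => exact List.prefix_rfl
    | succ n ih => exact ih.trans (by rw [hfs n]; exact List.prefix_append _ _)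
  have hlen : ∀ n, (f n).length = σ.length + n := by
    intro n
    induction n with
    | zero => simp [hf0]
    | succ n ih => rw [hfs n]; simp [ih]; omega
  -- one step of the descent
  have hstep : ∀ n, μ (paths (subtree T (f n))) ≤
      ENNReal.ofReal ((1 - ε) * (2:ℝ)⁻¹ ^ (σ.length + n + 1)) +
        μ (paths (subtree T (f (n+1)))) := by
    intro n
    have hb := hbs (f n) (hpre n)
    rw [hlen n] at hb
    have hsp := measure_paths_subtree_split μ T (f n)
    cases hcase : bs (f n) with
    | false =>
        rw [hcase] at hb
        have hnext : f (n+1) = f n ++ [true] := by rw [hfs n, hcase]; rfl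
        rw [hsp, hnext]
        exact add_le_add hb le_rfl
    | true =>
        rw [hcase] at hb
        have hnext : f (n+1) = f n ++ [false] := by rw [hfs n, hcase]; rfl
        rw [hsp, hnext, add_comm (μ (paths (subtree T (f n ++ [false]))))]
        exact add_le_add hb le_rfl
  -- nonnegativity facts
  have h2pos : (0:ℝ) < (2:ℝ)⁻¹ := by norm_num
  have hppos : ∀ k : ℕ, (0:ℝ) < (2:ℝ)⁻¹ ^ k := fun k => pow_pos h2pos k
  have hmono : ∀ n : ℕ, (2:ℝ)⁻¹ ^ (σ.length + n) ≤ (2:ℝ)⁻¹ ^ σ.length := by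
    intro n
    exact pow_le_pow_of_le_one (le_of_lt h2pos) (by norm_num) (Nat.le_add_right _ _)
  -- main invariant
  have hmain : ∀ n, μ (paths (subtree T σ)) ≤
      μ (paths (subtree T (f n))) +
        ENNReal.ofReal ((1 - ε) * ((2:ℝ)⁻¹ ^ σ.length - (2:ℝ)⁻¹ ^ (σ.length + n))) := by
    intro n
    induction n with
    | zero => simp [hf0]
    | succ n ih =>
        have h1 : (0:ℝ) ≤ (1 - ε) * (2:ℝ)⁻¹ ^ (σ.length + n + 1) :=
          le_of_lt (mul_pos hε' (hppos _))
        have h2 : (0:ℝ) ≤ (1 - ε) * ((2:ℝ)⁻¹ ^ σ.length - (2:ℝ)⁻¹ ^ (σ.length + n)) :=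
          mul_nonneg (le_of_lt hε') (sub_nonneg.mpr (hmono n))
        calc μ (paths (subtree T σ))
            ≤ μ (paths (subtree T (f n))) +
              ENNReal.ofReal ((1 - ε) * ((2:ℝ)⁻¹ ^ σ.length - (2:ℝ)⁻¹ ^ (σ.length + n))) := ih
          _ ≤ (ENNReal.ofReal ((1 - ε) * (2:ℝ)⁻¹ ^ (σ.length + n + 1)) +
                μ (paths (subtree T (f (n+1))))) +
              ENNReal.ofReal ((1 - ε) * ((2:ℝ)⁻¹ ^ σ.length - (2:ℝ)⁻¹ ^ (σ.length + n))) :=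
              add_le_add (hstep n) le_rfl
          _ = μ (paths (subtree T (f (n+1)))) +
              (ENNReal.ofReal ((1 - ε) * (2:ℝ)⁻¹ ^ (σ.length + n + 1)) +
               ENNReal.ofReal ((1 - ε) * ((2:ℝ)⁻¹ ^ σ.length - (2:ℝ)⁻¹ ^ (σ.length + n)))) := by
              ring
          _ = μ (paths (subtree T (f (n+1)))) +
              ENNReal.ofReal ((1 - ε) * ((2:ℝ)⁻¹ ^ σ.length - (2:ℝ)⁻¹ ^ (σ.length + (n+1)))) := by
              rw [← ENNReal.ofReal_add h1 h2]
              congr 1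
              rw [show σ.length + (n+1) = (σ.length + n) + 1 from rfl, pow_succ]
              ring
  -- the measure bound at level n
  have h2inv : (2:ENNReal)⁻¹ = ENNReal.ofReal ((2:ℝ)⁻¹) := by
    rw [ENNReal.ofReal_inv_of_pos (by norm_num), ENNReal.ofReal_ofNat]
  have hfinal : ∀ n, μ (paths (subtree T σ)) ≤
      ENNReal.ofReal ((1 - ε) * (2:ℝ)⁻¹ ^ σ.length + ε * (2:ℝ)⁻¹ ^ (σ.length + n)) := by
    intro n
    have h1 : μ (paths (subtree T (f n))) ≤ ENNReal.ofReal ((2:ℝ)⁻¹ ^ (σ.length + n)) := by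
      have h := measure_paths_subtree_le μ hμ T (f n)
      rw [hlen n] at h
      rwa [h2inv, ← ENNReal.ofReal_pow (le_of_lt h2pos)] at h
    have h2 : (0:ℝ) ≤ (1 - ε) * ((2:ℝ)⁻¹ ^ σ.length - (2:ℝ)⁻¹ ^ (σ.length + n)) :=
      mul_nonneg (le_of_lt hε') (sub_nonneg.mpr (hmono n))
    calc μ (paths (subtree T σ))
        ≤ μ (paths (subtree T (f n))) +
          ENNReal.ofReal ((1 - ε) * ((2:ℝ)⁻¹ ^ σ.length - (2:ℝ)⁻¹ ^ (σ.length + n))) := hmain n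
      _ ≤ ENNReal.ofReal ((2:ℝ)⁻¹ ^ (σ.length + n)) +
          ENNReal.ofReal ((1 - ε) * ((2:ℝ)⁻¹ ^ σ.length - (2:ℝ)⁻¹ ^ (σ.length + n))) :=
          add_le_add h1 le_rfl
      _ = ENNReal.ofReal ((1 - ε) * (2:ℝ)⁻¹ ^ σ.length + ε * (2:ℝ)⁻¹ ^ (σ.length + n)) := by
          rw [← ENNReal.ofReal_add (le_of_lt (hppos _)) h2]
          congr 1
          ring
  -- derive the contradiction
  have hfin : μ (paths (subtree T σ)) ≠ ⊤ := by
    refine ne_top_of_le_ne_top ?_ (measure_paths_subtree_le μ hμ T σ)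
    exact ENNReal.pow_ne_top (ENNReal.inv_ne_top.mpr (by norm_num))
  set m : ℝ := (μ (paths (subtree T σ))).toReal with hm
  set c : ℝ := (1 - ε) * (2:ℝ)⁻¹ ^ σ.length with hc
  have hcpos : 0 < c := mul_pos hε' (hppos _)
  have hcm : c < m := (ENNReal.ofReal_lt_iff_lt_toReal (le_of_lt hcpos) hfin).mp hd
  have hq1 : ∀ n : ℕ, (2:ℝ)⁻¹ ^ n ≤ 1 := fun n => pow_le_one₀ (le_of_lt h2pos) (by norm_num)
  have hb : ∀ n : ℕ, m ≤ c + ε * ((2:ℝ)⁻¹ ^ σ.length * (2:ℝ)⁻¹ ^ n) := by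
    intro n
    have h := hfinal n
    rw [pow_add] at h
    have hnn : (0:ℝ) ≤ c + ε * ((2:ℝ)⁻¹ ^ σ.length * (2:ℝ)⁻¹ ^ n) := by
      rcases le_or_gt 0 ε with hε0 | hε0
      · positivity
      · nlinarith [hppos σ.length, hppos n, hq1 n,
          mul_nonneg (le_of_lt (hppos σ.length)) (sub_nonneg.mpr (hq1 n))]
    exact (ENNReal.le_ofReal_iff_toReal_le hfin hnn).mp h
  have hεpos : 0 < ε := by
    have h := hb 0
    simp only [pow_zero, mul_one] at h
    nlinarith [hppos σ.length]
  have hεp : 0 < ε * (2:ℝ)⁻¹ ^ σ.length := mul_pos hεpos (hppos _)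
  obtain ⟨n, hn⟩ := exists_pow_lt_of_lt_one
    (show (0:ℝ) < (m - c) / (ε * (2:ℝ)⁻¹ ^ σ.length) from div_pos (by linarith) hεp)
    (show (2:ℝ)⁻¹ < 1 by norm_num)
  have hlt : (2:ℝ)⁻¹ ^ n * (ε * (2:ℝ)⁻¹ ^ σ.length) < m - c := (lt_div_iff₀ hεp).mp hn
  nlinarith [hb n]
end

section
/- There exists a computable binary tree T such that [T] is a perfect set and every perfect subtree of T computes the halting problem. Concretely: let m be the modulus function of ∅′, for X ∈ 2^ω let p^X(n) be the position of the n-th 1 in X, and let C = {X ∈ 2^ω : ∀n (p^X is defined at n → p^X(n) ≥ m(n))} ∪ {X : X has finitely many 1s and all 1-positions respect the bound}; then C is a Π⁰₁ class whose members with infinitely many 1s compute ∅′, and any perfect subtree of a tree T with [T] = C computes ∅′. -/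
open MeasureTheory

/-- Codes for oracle partial recursive functions: `Nat.Partrec.Code` with an
extra constructor for the oracle. -/
inductive Codeo : Type
  | zero : Codeo
  | succ : Codeo
  | left : Codeo
  | right : Codeo
  | oracle : Codeo
  | pair : Codeo → Codeo → Codeo
  | comp : Codeo → Codeo → Codeo
  | prec : Codeo → Codeo → Codeo
  | rfind' : Codeo → Codeo

/-- Evaluation of an oracle code relative to the oracle `O`. -/
def evalo (O : ℕ →. ℕ) : Codeo → ℕ →. ℕ
  | .zero => pure 0
  | .succ => fun n => Part.some (n + 1)
  | .left => fun n => Part.some n.unpair.1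
  | .right => fun n => Part.some n.unpair.2
  | .oracle => O
  | .pair cf cg => fun n => Nat.pair <$> evalo O cf n <*> evalo O cg n
  | .comp cf cg => fun n => evalo O cg n >>= evalo O cf
  | .prec cf cg =>
      Nat.unpaired fun a n =>
        n.rec (evalo O cf a) fun y IH => do
          let i ← IH
          evalo O cg (Nat.pair a (Nat.pair y i))
  | .rfind' cf =>
      Nat.unpaired fun a m =>
        (Nat.rfind fun n => (fun x => x = 0) <$> evalo O cf (Nat.pair a (n + m))).map (· + m)

/-- A fixed injective numbering of oracle codes. -/
def encodeCode : Codeo → ℕ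
  | .zero => 0
  | .succ => 1
  | .left => 2
  | .right => 3
  | .oracle => 4
  | .pair cf cg => 4 * Nat.pair (encodeCode cf) (encodeCode cg) + 5
  | .comp cf cg => 4 * Nat.pair (encodeCode cf) (encodeCode cg) + 6
  | .prec cf cg => 4 * Nat.pair (encodeCode cf) (encodeCode cg) + 7
  | .rfind' cf => 4 * encodeCode cf + 8

/-- Turing reducibility `f ≤_T g` for total functions on `ℕ`:
some oracle code computes `f` relative to `g`. -/
def TuringLE (f g : ℕ → ℕ) : Prop :=
  ∃ c : Codeo, ∀ n, evalo (fun x => Part.some (g x)) c n = Part.some (f n)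

/-- `f` is computable iff it is Turing reducible to a trivial oracle. -/
def ComputableInZero (f : ℕ → ℕ) : Prop := TuringLE f fun _ => 0

open Classical in
/-- The Turing jump of (the function) `g`: the halting problem relative to `g`,
as a 0-1 valued function. -/
noncomputable def jump (g : ℕ → ℕ) : ℕ → ℕ := fun e =>
  if ∃ c : Codeo, encodeCode c = e ∧ (evalo (fun x => Part.some (g x)) c e).Dom then 1 else 0

open Classical in
/-- The characteristic function (as `ℕ → ℕ`) of a set of binary strings,
via the canonical coding of `List Bool` by natural numbers. -/
noncomputable def chi (T : Set (List Bool)) : ℕ → ℕ := fun n =>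
  if ((Encodable.decode (α := List Bool) n).elim False fun σ => σ ∈ T) then 1 else 0

/-- The characteristic function (as `ℕ → ℕ`) of an element of Cantor space. -/
def chiX (X : ℕ → Bool) : ℕ → ℕ := fun n => cond (X n) 1 0

namespace Codeo

/-- Decoder inverse to `encodeCode`. -/
def ofNatCodeo : ℕ → Codeo
  | 0 => .zero
  | 1 => .succ
  | 2 => .left
  | 3 => .right
  | 4 => .oracle
  | n + 5 =>
    let q := n / 4
    have hq : q < n + 5 :=
      Nat.lt_succ_of_le (le_trans (Nat.div_le_self _ _) (Nat.le_add_right _ _))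
    have h1 : q.unpair.1 < n + 5 := lt_of_le_of_lt q.unpair_left_le hq
    have h2 : q.unpair.2 < n + 5 := lt_of_le_of_lt q.unpair_right_le hq
    match n % 4 with
    | 0 => .pair (ofNatCodeo q.unpair.1) (ofNatCodeo q.unpair.2)
    | 1 => .comp (ofNatCodeo q.unpair.1) (ofNatCodeo q.unpair.2)
    | 2 => .prec (ofNatCodeo q.unpair.1) (ofNatCodeo q.unpair.2)
    | _ + 3 => .rfind' (ofNatCodeo q)
  decreasing_by
    all_goals
      have := Nat.unpair_left_le (n / 4)
      have := Nat.unpair_right_le (n / 4)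
      have := Nat.div_le_self n 4
      omega

theorem enc_ofNat : ∀ n, encodeCode (ofNatCodeo n) = n
  | 0 => by simp [ofNatCodeo, encodeCode]
  | 1 => by simp [ofNatCodeo, encodeCode]
  | 2 => by simp [ofNatCodeo, encodeCode]
  | 3 => by simp [ofNatCodeo, encodeCode]
  | 4 => by simp [ofNatCodeo, encodeCode]
  | n + 5 => by
    have hq : n / 4 < n + 5 :=
      Nat.lt_succ_of_le (le_trans (Nat.div_le_self _ _) (Nat.le_add_right _ _))
    have h1 : (n / 4).unpair.1 < n + 5 := lt_of_le_of_lt (Nat.unpair_left_le _) hq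
    have h2 : (n / 4).unpair.2 < n + 5 := lt_of_le_of_lt (Nat.unpair_right_le _) hq
    have IH := enc_ofNat (n / 4)
    have IH1 := enc_ofNat (n / 4).unpair.1
    have IH2 := enc_ofNat (n / 4).unpair.2
    have hmod : n % 4 < 4 := Nat.mod_lt _ (by norm_num)
    have hdiv : 4 * (n / 4) + n % 4 = n := Nat.div_add_mod n 4
    interval_cases h : n % 4 <;>
      simp [ofNatCodeo, h, encodeCode, IH, IH1, IH2, Nat.pair_unpair] <;> omega

theorem ofNat_enc : ∀ c, ofNatCodeo (encodeCode c) = c := by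
  intro c
  induction c <;>
    simp [encodeCode, ofNatCodeo, Nat.mul_add_mod, Nat.mul_add_div, *]

theorem encodeCode_injective : Function.Injective encodeCode := by
  intro a b h
  have := congrArg ofNatCodeo h
  rwa [ofNat_enc, ofNat_enc] at this

/-- Translation to `Nat.Partrec.Code`, interpreting the oracle as the constant 0. -/
def toCode : Codeo → Nat.Partrec.Code
  | .zero => .zero
  | .succ => .succ
  | .left => .left
  | .right => .right
  | .oracle => .zero
  | .pair a b => .pair (toCode a) (toCode b)
  | .comp a b => .comp (toCode a) (toCode b)
  | .prec a b => .prec (toCode a) (toCode b)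
  | .rfind' a => .rfind' (toCode a)

theorem eval_toCode : ∀ c, (toCode c).eval = evalo (fun _ => Part.some 0) c := by
  intro c
  induction c <;> simp [toCode, evalo, Nat.Partrec.Code.eval, *] <;> rfl

end Codeo

/-- Functions partial recursive in the oracle `O`. -/
inductive RecInO (O : ℕ →. ℕ) : (ℕ →. ℕ) → Prop
  | oracle : RecInO O O
  | zero : RecInO O (pure 0)
  | succ : RecInO O Nat.succ
  | left : RecInO O (↑fun n : ℕ => n.unpair.1)
  | right : RecInO O (↑fun n : ℕ => n.unpair.2)
  | pair {f g} : RecInO O f → RecInO O g →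
      RecInO O fun n => Nat.pair <$> f n <*> g n
  | comp {f g} : RecInO O f → RecInO O g → RecInO O fun n => g n >>= f
  | prec {f g} : RecInO O f → RecInO O g → RecInO O (Nat.unpaired fun a n =>
      n.rec (f a) fun y IH => do let i ← IH; g (Nat.pair a (Nat.pair y i)))
  | rfind {f} : RecInO O f →
      RecInO O fun a => Nat.rfind fun n => (fun m => m = 0) <$> f (Nat.pair a n)

namespace RecInO

/-- Every function partial recursive in `O` has a `Codeo` code. -/
theorem exists_codeo {O : ℕ →. ℕ} {f : ℕ →. ℕ} (h : RecInO O f) :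
    ∃ c : Codeo, evalo O c = f := by
  induction h with
  | oracle => exact ⟨.oracle, rfl⟩
  | zero => exact ⟨.zero, rfl⟩
  | succ => exact ⟨.succ, rfl⟩
  | left => exact ⟨.left, rfl⟩
  | right => exact ⟨.right, rfl⟩
  | pair _ _ hf hg =>
    rcases hf with ⟨cf, rfl⟩; rcases hg with ⟨cg, rfl⟩
    exact ⟨.pair cf cg, rfl⟩
  | comp _ _ hf hg =>
    rcases hf with ⟨cf, rfl⟩; rcases hg with ⟨cg, rfl⟩
    exact ⟨.comp cf cg, rfl⟩
  | prec _ _ hf hg =>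
    rcases hf with ⟨cf, rfl⟩; rcases hg with ⟨cg, rfl⟩
    exact ⟨.prec cf cg, rfl⟩
  | rfind _ hf =>
    rcases hf with ⟨cf, rfl⟩
    refine ⟨.comp (.rfind' cf) (.pair (.pair .left .right) .zero), ?_⟩
    funext n
    simp [evalo, Seq.seq, pure, PFun.pure, Part.map_id']

theorem of_eq {O : ℕ →. ℕ} {f g : ℕ →. ℕ} (h : RecInO O f)
    (H : ∀ n, f n = g n) : RecInO O g := (funext H : f = g) ▸ h

theorem of_partrec {O : ℕ →. ℕ} {f : ℕ →. ℕ} (h : Nat.Partrec f) : RecInO O f := by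
  induction h with
  | zero => exact .zero
  | succ => exact .succ
  | left => exact .left
  | right => exact .right
  | pair _ _ hf hg => exact .pair hf hg
  | comp _ _ hf hg => exact .comp hf hg
  | prec _ _ hf hg => exact .prec hf hg
  | rfind _ hf => exact .rfind hf

end RecInO
namespace S8
open Nat.Partrec (Code)
open Nat.Partrec.Code

/-- The `Nat.Partrec.Code` of the `e`-th oracle code (oracle read as constant 0). -/
def cdE (e : ℕ) : Code := Codeo.toCode (Codeo.ofNatCodeo e)

open Classical in
theorem jump_zero_eq (e : ℕ) :
    jump (fun _ => 0) e = if ((cdE e).eval e).Dom then 1 else 0 := by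
  have key : (∃ c : Codeo, _root_.encodeCode c = e ∧
      (evalo (fun x => Part.some ((fun _ : ℕ => 0) x)) c e).Dom) ↔ ((cdE e).eval e).Dom := by
    constructor
    · rintro ⟨c, rfl, h⟩
      show ((Codeo.toCode (Codeo.ofNatCodeo (_root_.encodeCode c))).eval
        (_root_.encodeCode c)).Dom
      rw [Codeo.ofNat_enc, Codeo.eval_toCode]
      exact h
    · intro h
      have h' : (evalo (fun _ => Part.some 0) (Codeo.ofNatCodeo e) e).Dom := by
        rw [← Codeo.eval_toCode]; exact h
      exact ⟨Codeo.ofNatCodeo e, Codeo.enc_ofNat e, h'⟩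
  unfold jump
  exact if_congr key rfl rfl

/-- The numeric translation used for computability of the halting-time predicate. -/
def u (e : ℕ) : ℕ := Encodable.encode (cdE e)

theorem cdE_eq (e : ℕ) : cdE e = Denumerable.ofNat Code (u e) := by
  simp [u]

/-- The recurrence function for `u`. -/
def uG (l : List ℕ) : ℕ :=
  let n := l.length
  if n < 5 then (if n = 4 then 0 else n)
  else
    let k := n - 5
    let q := k / 4
    let a := l.getD q.unpair.1 0
    let b := l.getD q.unpair.2 0
    let c := l.getD q 0
    let p := Nat.pair a b
    if k % 4 = 0 then 2 * (2 * p) + 4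
    else if k % 4 = 1 then 2 * (2 * p + 1) + 4
    else if k % 4 = 2 then 2 * (2 * p) + 1 + 4
    else 2 * (2 * c + 1) + 1 + 4

theorem uG_primrec : Primrec uG := by
  have hlen : Primrec fun l : List ℕ => l.length := Primrec.list_length
  have hk : Primrec fun l : List ℕ => l.length - 5 :=
    Primrec.nat_sub.comp hlen (Primrec.const 5)
  have hq : Primrec fun l : List ℕ => (l.length - 5) / 4 :=
    Primrec.nat_div.comp hk (Primrec.const 4)
  have ha : Primrec fun l : List ℕ => l.getD ((l.length - 5) / 4).unpair.1 0 :=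
    (Primrec.list_getD 0).comp Primrec.id
      (Primrec.fst.comp (Primrec.unpair.comp hq))
  have hb : Primrec fun l : List ℕ => l.getD ((l.length - 5) / 4).unpair.2 0 :=
    (Primrec.list_getD 0).comp Primrec.id
      (Primrec.snd.comp (Primrec.unpair.comp hq))
  have hc : Primrec fun l : List ℕ => l.getD ((l.length - 5) / 4) 0 :=
    (Primrec.list_getD 0).comp Primrec.id hq
  have hp : Primrec fun l : List ℕ =>
      Nat.pair (l.getD ((l.length - 5) / 4).unpair.1 0) (l.getD ((l.length - 5) / 4).unpair.2 0) :=
    Primrec₂.natPair.comp ha hb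
  have hr : Primrec fun l : List ℕ => (l.length - 5) % 4 :=
    Primrec.nat_mod.comp hk (Primrec.const 4)
  have e0 : Primrec fun l : List ℕ => 2 * (2 * Nat.pair (l.getD ((l.length - 5) / 4).unpair.1 0)
      (l.getD ((l.length - 5) / 4).unpair.2 0)) + 4 :=
    Primrec.nat_add.comp (Primrec.nat_mul.comp (Primrec.const 2)
      (Primrec.nat_mul.comp (Primrec.const 2) hp)) (Primrec.const 4)
  have e1 : Primrec fun l : List ℕ => 2 * (2 * Nat.pair (l.getD ((l.length - 5) / 4).unpair.1 0)
      (l.getD ((l.length - 5) / 4).unpair.2 0) + 1) + 4 :=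
    Primrec.nat_add.comp (Primrec.nat_mul.comp (Primrec.const 2)
      (Primrec.nat_add.comp (Primrec.nat_mul.comp (Primrec.const 2) hp) (Primrec.const 1)))
      (Primrec.const 4)
  have e2 : Primrec fun l : List ℕ => 2 * (2 * Nat.pair (l.getD ((l.length - 5) / 4).unpair.1 0)
      (l.getD ((l.length - 5) / 4).unpair.2 0)) + 1 + 4 :=
    Primrec.nat_add.comp (Primrec.nat_add.comp (Primrec.nat_mul.comp (Primrec.const 2)
      (Primrec.nat_mul.comp (Primrec.const 2) hp)) (Primrec.const 1)) (Primrec.const 4)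
  have e3 : Primrec fun l : List ℕ => 2 * (2 * (l.getD ((l.length - 5) / 4) 0) + 1) + 1 + 4 :=
    Primrec.nat_add.comp (Primrec.nat_add.comp (Primrec.nat_mul.comp (Primrec.const 2)
      (Primrec.nat_add.comp (Primrec.nat_mul.comp (Primrec.const 2) hc) (Primrec.const 1)))
      (Primrec.const 1)) (Primrec.const 4)
  have hbase : Primrec fun l : List ℕ => if l.length = 4 then 0 else l.length :=
    Primrec.ite (Primrec.eq.comp hlen (Primrec.const 4)) (Primrec.const 0) hlen
  have hbig : Primrec fun l : List ℕ =>
      if (l.length - 5) % 4 = 0 then 2 * (2 * Nat.pair (l.getD ((l.length - 5) / 4).unpair.1 0)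
        (l.getD ((l.length - 5) / 4).unpair.2 0)) + 4
      else if (l.length - 5) % 4 = 1 then 2 * (2 * Nat.pair (l.getD ((l.length - 5) / 4).unpair.1 0)
        (l.getD ((l.length - 5) / 4).unpair.2 0) + 1) + 4
      else if (l.length - 5) % 4 = 2 then 2 * (2 * Nat.pair (l.getD ((l.length - 5) / 4).unpair.1 0)
        (l.getD ((l.length - 5) / 4).unpair.2 0)) + 1 + 4
      else 2 * (2 * (l.getD ((l.length - 5) / 4) 0) + 1) + 1 + 4 :=
    Primrec.ite (Primrec.eq.comp hr (Primrec.const 0)) e0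
      (Primrec.ite (Primrec.eq.comp hr (Primrec.const 1)) e1
        (Primrec.ite (Primrec.eq.comp hr (Primrec.const 2)) e2 e3))
  exact Primrec.ite (Primrec.nat_lt.comp hlen (Primrec.const 5)) hbase hbig

theorem getD_range_map {f : ℕ → ℕ} {n i : ℕ} (h : i < n) :
    ((List.range n).map f).getD i 0 = f i := by
  rw [List.getD_eq_getElem?_getD]
  simp [List.getElem?_map, List.getElem?_range h]

theorem uG_spec (n : ℕ) : uG ((List.range n).map u) = u n := by
  have hlen : ((List.range n).map u).length = n := by simp
  rcases Nat.lt_or_ge n 5 with h5 | h5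
  · interval_cases n <;> simp [uG, u, cdE, Codeo.ofNatCodeo, Codeo.toCode] <;> rfl
  · obtain ⟨m, rfl⟩ : ∃ m, n = m + 5 := ⟨n - 5, by omega⟩
    have hq : m / 4 < m + 5 := by
      have := Nat.div_le_self m 4; omega
    have h1 : (m / 4).unpair.1 < m + 5 := lt_of_le_of_lt (Nat.unpair_left_le _) hq
    have h2 : (m / 4).unpair.2 < m + 5 := lt_of_le_of_lt (Nat.unpair_right_le _) hq
    have hmod : m % 4 < 4 := Nat.mod_lt _ (by norm_num)
    unfold uG
    simp only [hlen]
    rw [if_neg (by omega)]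
    have e5 : m + 5 - 5 = m := by omega
    simp only [e5]
    rw [getD_range_map h1, getD_range_map h2, getD_range_map hq]
    have expand : u (m + 5) = encodeCode (Codeo.toCode (Codeo.ofNatCodeo (m + 5))) := by
      rw [u, cdE, encodeCode_eq]
    interval_cases h : m % 4 <;>
      simp [expand, Codeo.ofNatCodeo, h, Codeo.toCode, u, cdE,
        Nat.Partrec.Code.encodeCode_eq, Nat.Partrec.Code.encodeCode]

theorem u_computable : Computable u := by
  have hg : Computable₂ fun (_ : Unit) (l : List ℕ) => (some (uG l) : Option ℕ) :=
    (Computable.option_some.comp (uG_primrec.to_comp.comp Computable.snd)).to₂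
  have := Computable.nat_strong_rec (fun (_ : Unit) n => u n) hg fun _ n => by
    simp [uG_spec]
  exact this.comp (Computable.const ()) Computable.id

/-- `e` halts on itself within `s` steps. -/
def haltsB (e s : ℕ) : Bool := (evaln s (cdE e) e).isSome

theorem haltsB_computable : Computable₂ haltsB := by
  have h1 : Computable fun p : ℕ × ℕ =>
      (evaln p.2 (Denumerable.ofNat Code (u p.1)) p.1).isSome :=
    Primrec.option_isSome.to_comp.comp (primrec_evaln.to_comp.comp
      ((Computable.snd.pair ((Computable.ofNat Code).comp
        (u_computable.comp Computable.fst))).pair Computable.fst))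
  have h2 : Computable fun p : ℕ × ℕ => haltsB p.1 p.2 :=
    h1.of_eq fun p => by simp only [haltsB, cdE_eq]
  exact h2.to₂

theorem haltsB_mono {e s s' : ℕ} (h : s ≤ s') (hh : haltsB e s = true) : haltsB e s' = true := by
  rw [haltsB, Option.isSome_iff_exists] at hh ⊢
  obtain ⟨x, hx⟩ := hh
  exact ⟨x, evaln_mono h hx⟩

theorem haltsB_sound {e s : ℕ} (h : haltsB e s = true) : ((cdE e).eval e).Dom := by
  rw [haltsB, Option.isSome_iff_exists] at h
  obtain ⟨x, hx⟩ := h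
  exact Part.dom_iff_mem.2 ⟨x, evaln_sound hx⟩

theorem haltsB_complete {e : ℕ} (h : ((cdE e).eval e).Dom) : ∃ s, haltsB e s = true := by
  obtain ⟨x, hx⟩ := Part.dom_iff_mem.1 h
  obtain ⟨s, hs⟩ := evaln_complete.1 hx
  exact ⟨s, by rw [haltsB, Option.isSome_iff_exists]; exact ⟨x, hs⟩⟩

/-- Number of `true`s among the first `i` entries of `σ`. -/
def cnt (σ : List Bool) (i : ℕ) : ℕ :=
  (List.range i).foldl (fun a j => a + cond (σ.getD j false) 1 0) 0

theorem cnt_succ (σ : List Bool) (i : ℕ) :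
    cnt σ (i + 1) = cnt σ i + cond (σ.getD i false) 1 0 := by
  rw [cnt, List.range_succ, List.foldl_append]; rfl

theorem cnt_mono (σ : List Bool) {i j : ℕ} (h : i ≤ j) : cnt σ i ≤ cnt σ j := by
  induction j with
  | zero => simp_all [Nat.le_zero.1 h]
  | succ j ih =>
    rcases Nat.lt_or_ge i (j+1) with h' | h'
    · exact le_trans (ih (by omega)) (by rw [cnt_succ]; omega)
    · have : i = j + 1 := by omega
      subst this; exact le_rfl

/-- Strings agreeing up to `i` have the same count. -/
theorem cnt_congr {σ τ : List Bool} {i : ℕ}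
    (h : ∀ j < i, σ.getD j false = τ.getD j false) : cnt σ i = cnt τ i := by
  induction i with
  | zero => rfl
  | succ i ih =>
    rw [cnt_succ, cnt_succ, ih fun j hj => h j (by omega), h i (by omega)]

/-- Bounded existential as a Boolean. -/
def anyB (n : ℕ) (p : ℕ → Bool) : Bool :=
  (List.range n).foldl (fun b j => b || p j) false

theorem anyB_succ (n : ℕ) (p : ℕ → Bool) : anyB (n + 1) p = (anyB n p || p n) := by
  rw [anyB, List.range_succ, List.foldl_append]; rfl

theorem anyB_iff {n : ℕ} {p : ℕ → Bool} : anyB n p = true ↔ ∃ j < n, p j = true := by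
  induction n with
  | zero => simp [anyB]
  | succ n ih =>
    rw [anyB_succ, Bool.or_eq_true, ih]
    constructor
    · rintro (⟨j, hj, hp⟩ | h)
      · exact ⟨j, by omega, hp⟩
      · exact ⟨n, by omega, h⟩
    · rintro ⟨j, hj, hp⟩
      rcases Nat.lt_or_ge j n with h' | h'
      · exact Or.inl ⟨j, h', hp⟩
      · have : j = n := by omega
        subst this
        exact Or.inr hp

theorem anyB_primrec {α : Type} [Primcodable α] {f : α → ℕ} {p : α → ℕ → Bool}
    (hf : Primrec f) (hp : Primrec₂ p) : Primrec fun a => anyB (f a) (p a) := by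
  have : Primrec fun a => (List.range (f a)).foldl (fun b j => b || p a j) false :=
    Primrec.list_foldl (Primrec.list_range.comp hf) (Primrec.const false)
      ((Primrec.dom_bool₂ (· || ·)).comp (Primrec.fst.comp Primrec.snd)
        (hp.comp Primrec.fst (Primrec.snd.comp Primrec.snd))).to₂
  exact this

/-- The Boolean membership test for the tree `T`. -/
def okB (σ : List Bool) : Bool :=
  !(anyB σ.length fun i => (σ.getD i false) &&
      anyB (cnt σ i) fun e => haltsB e σ.length && !haltsB e i)

theorem okB_iff {σ : List Bool} : okB σ = true ↔
    ∀ i < σ.length, σ.getD i false = true →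
      ∀ e < cnt σ i, haltsB e σ.length = true → haltsB e i = true := by
  constructor
  · intro h i hi h1 e he h3
    cases h4 : haltsB e i with
    | true => rfl
    | false =>
      exfalso
      have hx : (anyB σ.length fun i => (σ.getD i false) &&
          anyB (cnt σ i) fun e => haltsB e σ.length && !haltsB e i) = true :=
        anyB_iff.2 ⟨i, hi, by
          rw [Bool.and_eq_true]
          exact ⟨h1, anyB_iff.2 ⟨e, he, by
            rw [Bool.and_eq_true]
            exact ⟨h3, by rw [h4]; rfl⟩⟩⟩⟩
      rw [okB, hx] at h
      simp at h
  · intro hall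
    cases hany : (anyB σ.length fun i => (σ.getD i false) &&
        anyB (cnt σ i) fun e => haltsB e σ.length && !haltsB e i) with
    | false => rw [okB, hany]; rfl
    | true =>
      exfalso
      obtain ⟨i, hi, hp⟩ := anyB_iff.1 hany
      rw [Bool.and_eq_true] at hp
      obtain ⟨h1, h2⟩ := hp
      obtain ⟨e, he, hpe⟩ := anyB_iff.1 h2
      rw [Bool.and_eq_true] at hpe
      obtain ⟨h3, h4⟩ := hpe
      rw [hall i hi h1 e he h3] at h4
      simp at h4

theorem cnt_eq_rec (σ : List Bool) (n : ℕ) :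
    cnt σ n = Nat.rec (motive := fun _ => ℕ) 0
      (fun j IH => IH + cond (σ.getD j false) 1 0) n := by
  induction n with
  | zero => rfl
  | succ n ih => rw [cnt_succ, ih]

theorem cnt_computable : Computable₂ cnt := by
  have hh : Computable₂ fun (a : List Bool × ℕ) (q : ℕ × ℕ) =>
      q.2 + cond (a.1.getD q.1 false) 1 0 := by
    have : Primrec₂ fun (a : List Bool × ℕ) (q : ℕ × ℕ) =>
        q.2 + cond (a.1.getD q.1 false) 1 0 :=
      (Primrec.nat_add.comp (Primrec.snd.comp Primrec.snd)
        (Primrec.cond ((Primrec.list_getD false).comp (Primrec.fst.comp Primrec.fst)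
          (Primrec.fst.comp Primrec.snd)) (Primrec.const 1) (Primrec.const 0))).to₂
    exact this.to_comp
  have := Computable.nat_rec (Computable.snd (α := List Bool) (β := ℕ))
    (Computable.const 0) hh
  have h2 : Computable fun a : List Bool × ℕ => cnt a.1 a.2 :=
    this.of_eq fun a => (cnt_eq_rec a.1 a.2).symm
  exact h2.to₂

theorem anyB_eq_rec (n : ℕ) (p : ℕ → Bool) :
    anyB n p = Nat.rec (motive := fun _ => Bool) false (fun j IH => IH || p j) n := by
  induction n with
  | zero => rfl
  | succ n ih => rw [anyB_succ, ih]

theorem anyB_computable {α : Type} [Primcodable α] {f : α → ℕ} {p : α → ℕ → Bool}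
    (hf : Computable f) (hp : Computable₂ p) : Computable fun a => anyB (f a) (p a) := by
  have hh : Computable₂ fun (a : α) (q : ℕ × Bool) => q.2 || p a q.1 :=
    (Computable.cond (Computable.snd.comp Computable.snd) (Computable.const true)
      (hp.comp Computable.fst (Computable.fst.comp Computable.snd))).to₂
  have := Computable.nat_rec hf (Computable.const false) hh
  exact this.of_eq fun a => (anyB_eq_rec (f a) (p a)).symm

theorem okB_computable : Computable okB := by
  have hinner : Computable₂ fun (a : List Bool × ℕ) (e : ℕ) =>
      haltsB e a.1.length && !haltsB e a.2 := by
    have h1 : Computable fun q : (List Bool × ℕ) × ℕ => haltsB q.2 q.1.1.length :=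
      haltsB_computable.comp Computable.snd
        (Computable.list_length.comp (Computable.fst.comp Computable.fst))
    have h2 : Computable fun q : (List Bool × ℕ) × ℕ => haltsB q.2 q.1.2 :=
      haltsB_computable.comp Computable.snd (Computable.snd.comp Computable.fst)
    have h3 : Computable fun q : (List Bool × ℕ) × ℕ =>
        haltsB q.2 q.1.1.length && !haltsB q.2 q.1.2 :=
      (Computable.cond h1 (Computable.cond h2 (Computable.const false)
        (Computable.const true)) (Computable.const false)).of_eq fun q => by
          cases haltsB q.2 q.1.1.length <;> cases haltsB q.2 q.1.2 <;> rfl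
    exact h3.to₂
  have hmid : Computable₂ fun (σ : List Bool) (i : ℕ) =>
      (σ.getD i false) && anyB (cnt σ i) fun e => haltsB e σ.length && !haltsB e i := by
    have hga : Computable fun a : List Bool × ℕ => a.1.getD a.2 false :=
      (Primrec.list_getD false).to_comp.comp Computable.fst Computable.snd
    have hany : Computable fun a : List Bool × ℕ =>
        anyB (cnt a.1 a.2) fun e => haltsB e a.1.length && !haltsB e a.2 :=
      anyB_computable (cnt_computable.comp Computable.fst Computable.snd) hinner
    have h4 : Computable fun a : List Bool × ℕ => a.1.getD a.2 false &&
        anyB (cnt a.1 a.2) fun e => haltsB e a.1.length && !haltsB e a.2 :=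
      (Computable.cond hga hany (Computable.const false)).of_eq fun a => by
        cases a.1.getD a.2 false <;> rfl
    exact h4.to₂
  have houter : Computable fun σ : List Bool =>
      anyB σ.length fun i => (σ.getD i false) &&
        anyB (cnt σ i) fun e => haltsB e σ.length && !haltsB e i :=
    anyB_computable Computable.list_length hmid
  exact (Computable.cond houter (Computable.const false) (Computable.const true)).of_eq
    fun σ => by rw [okB]; cases h : (anyB σ.length fun i => (σ.getD i false) &&
      anyB (cnt σ i) fun e => haltsB e σ.length && !haltsB e i) <;> rfl

/-- The tree. -/
def TT : Set (List Bool) := {σ | okB σ = true}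

theorem chiTT_eq (n : ℕ) :
    chi TT n = (Encodable.decode (α := List Bool) n).casesOn
      (motive := fun _ => ℕ) 0 (fun σ => cond (okB σ) 1 0) := by
  rw [chi]
  cases hd : Encodable.decode (α := List Bool) n with
  | none => simp
  | some σ =>
    simp only [Option.elim]
    show @ite _ (σ ∈ TT) (Classical.propDecidable _) 1 0 = _
    cases h : okB σ with
    | true => rw [if_pos (show σ ∈ TT from h)]; rfl
    | false =>
      rw [if_neg (show σ ∉ TT from fun hc => by
        have : okB σ = true := hc
        rw [h] at this
        exact Bool.noConfusion this)]
      rfl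

theorem chiTT_computable : Computable (chi TT) := by
  have : Computable fun n =>
      (Encodable.decode (α := List Bool) n).casesOn (motive := fun _ => ℕ) 0
        (fun σ => cond (okB σ) 1 0) :=
    Computable.option_casesOn Computable.decode (Computable.const 0)
      (Computable.cond (okB_computable.comp Computable.snd) (Computable.const 1)
        (Computable.const 0)).to₂
  exact this.of_eq fun n => (chiTT_eq n).symm

theorem computableInZero_of_computable {f : ℕ → ℕ} (hf : Computable f) :
    ComputableInZero f := by
  have h1 : Nat.Partrec (↑f : ℕ →. ℕ) := Partrec.nat_iff.1 hf
  obtain ⟨c, hc⟩ := RecInO.exists_codeo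
    (RecInO.of_partrec (O := fun x => Part.some ((fun _ : ℕ => 0) x)) h1)
  exact ⟨c, fun n => by rw [hc]; rfl⟩

theorem prefix_getD {τ σ : List Bool} (h : τ <+: σ) {j : ℕ} (hj : j < τ.length) :
    τ.getD j false = σ.getD j false := by
  obtain ⟨rest, rfl⟩ := h
  rw [List.getD_eq_getElem _ _ hj,
    List.getD_eq_getElem _ _ (lt_of_lt_of_le hj (by simp))]
  rw [List.getElem_append_left hj]

theorem TT_isTree : IsTree TT := by
  intro σ hσ τ hpre
  rw [TT, Set.mem_setOf_eq, okB_iff] at hσ ⊢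
  intro i hi h1 e he h3
  have hlen : τ.length ≤ σ.length := hpre.length_le
  have hgd : τ.getD i false = σ.getD i false := prefix_getD hpre hi
  have hcnt : cnt τ i = cnt σ i :=
    cnt_congr fun j hj => prefix_getD hpre (lt_trans hj hi)
  exact hσ i (lt_of_lt_of_le hi hlen) (hgd ▸ h1) e (hcnt ▸ he)
    (haltsB_mono hlen h3)

theorem initSeg_length (X : ℕ → Bool) (n : ℕ) : (initSeg X n).length = n := by
  simp [initSeg]

theorem initSeg_getD {X : ℕ → Bool} {n j : ℕ} (h : j < n) :
    (initSeg X n).getD j false = X j := by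
  rw [List.getD_eq_getElem _ _ (by simp [initSeg_length, h])]
  simp [initSeg]

theorem initSeg_congr {X Y : ℕ → Bool} {n : ℕ} (h : ∀ i < n, X i = Y i) :
    initSeg X n = initSeg Y n := by
  simp only [initSeg]
  congr 1
  funext i
  exact h i i.2

/-- Number of ones of `X` below `i`. -/
def cntX (X : ℕ → Bool) (i : ℕ) : ℕ := cnt (initSeg X i) i

theorem cnt_initSeg {X : ℕ → Bool} {i n : ℕ} (h : i ≤ n) :
    cnt (initSeg X n) i = cntX X i :=
  cnt_congr fun j hj => by
    rw [initSeg_getD (lt_of_lt_of_le hj h), initSeg_getD (lt_of_lt_of_le hj (le_refl i) |>.trans_le (le_refl i))]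

theorem cntX_congr {X Y : ℕ → Bool} {i : ℕ} (h : ∀ j < i, X j = Y j) :
    cntX X i = cntX Y i :=
  cnt_congr fun j hj => by rw [initSeg_getD hj, initSeg_getD hj, h j hj]

/-- The infinitary condition cut out by the tree `TT`. -/
def PathCond (X : ℕ → Bool) : Prop :=
  ∀ i, X i = true → ∀ e < cntX X i, ((cdE e).eval e).Dom → haltsB e i = true

theorem mem_paths_iff {X : ℕ → Bool} : X ∈ paths TT ↔ PathCond X := by
  constructor
  · intro hX i hi e he hdom
    obtain ⟨s, hs⟩ := haltsB_complete hdom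
    set L := max (i + 1) s with hL
    have h1 : okB (initSeg X L) = true := hX L
    rw [okB_iff] at h1
    have hiL : i < L := lt_of_lt_of_le (Nat.lt_succ_self i) (le_max_left _ _)
    have := h1 i (by rw [initSeg_length]; exact hiL)
      (by rw [initSeg_getD hiL]; exact hi) e
      (by rw [cnt_initSeg (le_of_lt hiL)]; exact he)
    rw [initSeg_length] at this
    exact this (haltsB_mono (le_max_right _ _) hs)
  · intro hX n
    show okB (initSeg X n) = true
    rw [okB_iff]
    intro i hi h1 e he h3
    rw [initSeg_length] at hi h3
    rw [initSeg_getD hi] at h1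
    rw [cnt_initSeg (le_of_lt hi)] at he
    exact hX i h1 e he (haltsB_sound h3)

/-- The basic cylinder of radius `n` about `X`. -/
def Cyl (X : ℕ → Bool) (n : ℕ) : Set (ℕ → Bool) := {Y | ∀ i < n, Y i = X i}

theorem Cyl_isOpen (X : ℕ → Bool) (n : ℕ) : IsOpen (Cyl X n) := by
  have : Cyl X n = ⋂ i ∈ Finset.range n, (fun Y : ℕ → Bool => Y i) ⁻¹' {X i} := by
    ext Y
    simp [Cyl]
  rw [this]
  exact isOpen_biInter_finset fun i _ =>
    (continuous_apply i).isOpen_preimage _ (isOpen_discrete _)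

theorem self_mem_Cyl (X : ℕ → Bool) (n : ℕ) : X ∈ Cyl X n := fun i _ => rfl

theorem exists_Cyl_subset {X : ℕ → Bool} {U : Set (ℕ → Bool)} (hU : U ∈ nhds X) :
    ∃ n, Cyl X n ⊆ U := by
  rw [nhds_pi, Filter.mem_pi] at hU
  obtain ⟨I, hIfin, t, ht, hsub⟩ := hU
  obtain ⟨n, hn⟩ := hIfin.bddAbove
  refine ⟨n + 1, fun Y hY => hsub fun i hi => ?_⟩
  rw [hY i (lt_of_le_of_lt (hn hi) (Nat.lt_succ_self n))]
  exact mem_of_mem_nhds (ht i)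

theorem paths_TT_closed : IsClosed (paths TT) := by
  rw [← isOpen_compl_iff]
  rw [isOpen_iff_forall_mem_open]
  intro X hX
  rw [Set.mem_compl_iff, paths] at hX
  simp only [Set.mem_setOf_eq, not_forall] at hX
  obtain ⟨n, hn⟩ := hX
  refine ⟨Cyl X n, fun Y hY hYp => ?_, Cyl_isOpen X n, self_mem_Cyl X n⟩
  exact hn (initSeg_congr (fun i hi => hY i hi) ▸ hYp n)

theorem exists_settle (K N : ℕ) :
    ∃ Q, N ≤ Q ∧ ∀ e < K, ((cdE e).eval e).Dom → haltsB e Q = true := by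
  induction K with
  | zero => exact ⟨N, le_refl N, fun e he => absurd he (Nat.not_lt_zero e)⟩
  | succ K ih =>
    obtain ⟨Q, hQN, hQ⟩ := ih
    by_cases hdom : ((cdE K).eval K).Dom
    · obtain ⟨s, hs⟩ := haltsB_complete hdom
      refine ⟨max Q s, le_trans hQN (le_max_left _ _), fun e he hd => ?_⟩
      rcases Nat.lt_or_ge e K with h' | h'
      · exact haltsB_mono (le_max_left _ _) (hQ e h' hd)
      · have : e = K := by omega
        subst this
        exact haltsB_mono (le_max_right _ _) hs
    · refine ⟨Q, hQN, fun e he hd => ?_⟩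
      rcases Nat.lt_or_ge e K with h' | h'
      · exact hQ e h' hd
      · have : e = K := by omega
        subst this
        exact absurd hd hdom

theorem cntX_succ (W : ℕ → Bool) (i : ℕ) :
    cntX W (i + 1) = cntX W i + cond (W i) 1 0 := by
  rw [cntX, cnt_succ, cnt_initSeg (Nat.le_succ i), initSeg_getD (Nat.lt_succ_self i)]

theorem cntX_const_of_false {W : ℕ → Bool} {N i : ℕ} (h : N ≤ i)
    (hf : ∀ j, N ≤ j → j < i → W j = false) : cntX W i = cntX W N := by
  induction i with
  | zero => rw [Nat.le_zero.1 h]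
  | succ i ih =>
    rcases Nat.lt_or_ge N (i + 1) with h' | h'
    · have hNi : N ≤ i := by omega
      rw [cntX_succ, hf i hNi (Nat.lt_succ_self i),
        ih hNi fun j hj hji => hf j hj (by omega)]
      rfl
    · have : N = i + 1 := by omega
      rw [this]

theorem paths_TT_perfect : Perfect (paths TT) := by
  refine ⟨paths_TT_closed, ?_⟩
  rw [preperfect_iff_nhds]
  intro X hX U hU
  obtain ⟨N, hN⟩ := exists_Cyl_subset hU
  have hXc : PathCond X := mem_paths_iff.1 hX
  obtain ⟨Q, hQN, hQ⟩ := exists_settle (cntX X N) N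
  set Y : ℕ → Bool := fun i => if i < N then X i else false with hY
  set Z : ℕ → Bool := fun i => if i < N then X i else decide (i = Q) with hZ
  have hYagree : ∀ i < N, Y i = X i := fun i hi => by simp [hY, hi]
  have hZagree : ∀ i < N, Z i = X i := fun i hi => by simp [hZ, hi]
  have hYmem : Y ∈ paths TT := by
    rw [mem_paths_iff]
    intro i hi e he hdom
    have hiN : i < N := by
      by_contra hc
      rw [hY] at hi
      simp only [if_neg hc] at hi
      exact Bool.noConfusion hi
    have hXi : X i = true := by rw [← hYagree i hiN]; exact hi
    have hcnt : cntX Y i = cntX X i := cntX_congr fun j hj => hYagree j (lt_trans hj hiN)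
    exact hXc i hXi e (by rw [← hcnt]; exact he) hdom
  have hZmem : Z ∈ paths TT := by
    rw [mem_paths_iff]
    intro i hi e he hdom
    rcases Nat.lt_or_ge i N with hiN | hiN
    · have hXi : X i = true := by rw [← hZagree i hiN]; exact hi
      have hcnt : cntX Z i = cntX X i := cntX_congr fun j hj => hZagree j (lt_trans hj hiN)
      exact hXc i hXi e (by rw [← hcnt]; exact he) hdom
    · have hiQ : i = Q := by
        rw [hZ] at hi
        simp only [if_neg (not_lt.2 hiN)] at hi
        exact of_decide_eq_true hi
      subst hiQ
      have hcnt : cntX Z i = cntX X N := by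
        have h1 : cntX Z i = cntX Z N := by
          apply cntX_const_of_false hQN
          intro j hjN hji
          simp [hZ, not_lt.2 hjN, Nat.ne_of_lt hji]
        rw [h1]
        exact cntX_congr hZagree
      rw [hcnt] at he
      exact hQ e he hdom
  have hYQ : Y Q = false := by simp [hY, not_lt.2 hQN]
  have hZQ : Z Q = true := by simp [hZ, not_lt.2 hQN]
  by_cases hYX : Y = X
  · refine ⟨Z, ⟨hN (fun i hi => hZagree i hi), hZmem⟩, fun hc => ?_⟩
    rw [hc, ← hYX] at hZQ
    rw [hYQ] at hZQ
    exact Bool.noConfusion hZQ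
  · exact ⟨Y, ⟨hN (fun i hi => hYagree i hi), hYmem⟩, hYX⟩

theorem paths_TT_nonempty : (paths TT).Nonempty := by
  refine ⟨fun _ => false, mem_paths_iff.2 fun i hi => ?_⟩
  exact absurd hi (by simp)

theorem prefix_of_getD_agree {τ₀ τ₁ : List Bool} (hlen : τ₀.length ≤ τ₁.length)
    (h : ∀ j < τ₀.length, τ₀.getD j false = τ₁.getD j false) : τ₀ <+: τ₁ := by
  rw [List.prefix_iff_eq_take]
  apply List.ext_getElem
  · simp [Nat.min_eq_left hlen]
  · intro i h1 h2
    rw [List.getElem_take]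
    have hi : i < τ₀.length := h1
    have h3 := h i hi
    rw [List.getD_eq_getElem _ _ hi, List.getD_eq_getElem _ _ (lt_of_lt_of_le hi hlen)] at h3
    exact h3

theorem nil_mem_of_tree {P : Set (List Bool)} (hP : IsTree P) (hne : P.Nonempty) :
    [] ∈ P := by
  obtain ⟨σ, hσ⟩ := hne
  exact hP σ hσ [] (List.nil_prefix)

theorem perfect_proper_ext {P : Set (List Bool)} (hperf : IsPerfectTree P)
    {σ : List Bool} (hσ : σ ∈ P) : ∃ τ ∈ P, σ <+: τ ∧ σ.length < τ.length := by
  obtain ⟨τ₀, h0, τ₁, h1, p0, p1, i01, _⟩ := hperf.2 σ hσ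
  rcases Nat.lt_or_ge σ.length τ₀.length with h | h
  · exact ⟨τ₀, h0, p0, h⟩
  · have e0 : τ₀ = σ := (p0.eq_of_length (le_antisymm p0.length_le h)).symm
    rcases Nat.lt_or_ge σ.length τ₁.length with h' | h'
    · exact ⟨τ₁, h1, p1, h'⟩
    · have e1 : τ₁ = σ := (p1.eq_of_length (le_antisymm p1.length_le h')).symm
      exact absurd (e0 ▸ e1 ▸ List.prefix_refl σ) i01

theorem perfect_long_ext {P : Set (List Bool)} (hperf : IsPerfectTree P)
    {σ : List Bool} (hσ : σ ∈ P) (L : ℕ) : ∃ τ ∈ P, σ <+: τ ∧ L ≤ τ.length := by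
  induction L with
  | zero => exact ⟨σ, hσ, List.prefix_refl σ, Nat.zero_le _⟩
  | succ L ih =>
    obtain ⟨τ, hτ, hpre, hlen⟩ := ih
    obtain ⟨τ', hτ', hpre', hlen'⟩ := perfect_proper_ext hperf hτ
    exact ⟨τ', hτ', hpre.trans hpre', by omega⟩

theorem cnt_prefix {σ τ : List Bool} (h : σ <+: τ) (i : ℕ) (hi : i ≤ σ.length) :
    cnt σ i = cnt τ i :=
  cnt_congr fun j hj => prefix_getD h (lt_of_lt_of_le hj hi)

theorem perfect_more_ones {P : Set (List Bool)} (hP : IsTree P) (hperf : IsPerfectTree P)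
    {σ : List Bool} (hσ : σ ∈ P) :
    ∃ τ ∈ P, σ <+: τ ∧ cnt σ σ.length < cnt τ τ.length := by
  obtain ⟨τ₀, h0, τ₁, h1, p0, p1, i01, i10⟩ := hperf.2 σ hσ
  have hdis : ∃ j, τ₀.getD j false ≠ τ₁.getD j false := by
    by_contra hc
    push_neg at hc
    rcases le_or_gt τ₀.length τ₁.length with h | h
    · exact i01 (prefix_of_getD_agree h fun j _ => hc j)
    · exact i10 (prefix_of_getD_agree (le_of_lt h) fun j _ => (hc j).symm)
  obtain ⟨j, hj⟩ := hdis
  have hjσ : σ.length ≤ j := by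
    by_contra hc
    push_neg at hc
    rw [← prefix_getD p0 hc, ← prefix_getD p1 hc] at hj
    exact hj rfl
  -- one of the two has a true at j
  have key : ∀ τ : List Bool, τ ∈ P → σ <+: τ → τ.getD j false = true →
      ∃ τ' ∈ P, σ <+: τ' ∧ cnt σ σ.length < cnt τ' τ'.length := by
    intro τ hτ hpre htrue
    have hjlen : j < τ.length := by
      by_contra hc
      push_neg at hc
      rw [List.getD_eq_default _ _ hc] at htrue
      exact Bool.noConfusion htrue
    refine ⟨τ, hτ, hpre, ?_⟩
    have e1 : cnt σ σ.length = cnt τ σ.length := cnt_prefix hpre _ le_rfl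
    have e2 : cnt τ σ.length ≤ cnt τ j := cnt_mono τ hjσ
    have e3 : cnt τ j < cnt τ (j + 1) := by
      rw [cnt_succ, htrue]
      exact Nat.lt_succ_self _
    have e4 : cnt τ (j + 1) ≤ cnt τ τ.length := cnt_mono τ hjlen
    omega
  cases hb : τ₀.getD j false with
  | true => exact key τ₀ h0 p0 hb
  | false =>
    have : τ₁.getD j false = true := by
      rw [hb] at hj
      cases hb1 : τ₁.getD j false with
      | true => rfl
      | false => rw [hb1] at hj; exact absurd rfl hj
    exact key τ₁ h1 p1 this

theorem perfect_many_ones {P : Set (List Bool)} (hP : IsTree P) (hperf : IsPerfectTree P)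
    (k : ℕ) : ∃ τ ∈ P, k ≤ cnt τ τ.length := by
  induction k with
  | zero => exact ⟨[], nil_mem_of_tree hP hperf.1, Nat.zero_le _⟩
  | succ k ih =>
    obtain ⟨τ, hτ, hk⟩ := ih
    obtain ⟨τ', hτ', _, hlt⟩ := perfect_more_ones hP hperf hτ
    exact ⟨τ', hτ', by omega⟩

theorem cnt_pos_exists {τ : List Bool} : ∀ {L m : ℕ}, m < cnt τ L →
    ∃ p < L, τ.getD p false = true ∧ cnt τ p = m := by
  intro L
  induction L with
  | zero => intro m hm; rw [cnt] at hm; simp at hm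
  | succ L ih =>
    intro m hm
    rcases Nat.lt_or_ge m (cnt τ L) with h | h
    · obtain ⟨p, hp, h1, h2⟩ := ih h
      exact ⟨p, by omega, h1, h2⟩
    · rw [cnt_succ] at hm
      cases hb : τ.getD L false with
      | false => rw [hb] at hm; simp at hm; omega
      | true =>
        rw [hb] at hm
        simp at hm
        have : m = cnt τ L := by omega
        exact ⟨L, Nat.lt_succ_self L, hb, this ▸ rfl⟩

theorem chi_eq_one_iff {P : Set (List Bool)} {a : ℕ} :
    chi P a = 1 ↔ ∃ σ, Encodable.decode (α := List Bool) a = some σ ∧ σ ∈ P := by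
  rw [chi]
  cases hd : Encodable.decode (α := List Bool) a with
  | none => simp
  | some σ =>
    simp only [Option.elim]
    show @ite _ (σ ∈ P) (Classical.propDecidable _) 1 0 = 1 ↔ _
    constructor
    · intro h
      by_cases hm : σ ∈ P
      · exact ⟨σ, rfl, hm⟩
      · rw [if_neg hm] at h; exact absurd h (by norm_num)
    · rintro ⟨σ', hσ', hm⟩
      cases Option.some.inj hσ'
      rw [if_pos hm]

theorem chi_encode_mem {P : Set (List Bool)} {σ : List Bool} (h : σ ∈ P) :
    chi P (Encodable.encode σ) = 1 :=
  chi_eq_one_iff.2 ⟨σ, Encodable.encodek σ, h⟩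

/-- The oracle-free part of the search predicate. -/
def DB (m v : ℕ) : Bool :=
  cond (decide (v = 1))
    ((Encodable.decode (α := List Bool) m.unpair.2.unpair.1).casesOn
      (motive := fun _ => Bool) false fun σ =>
        cond (decide (m.unpair.2.unpair.2 < σ.length))
          (cond (σ.getD m.unpair.2.unpair.2 false)
            (decide (cnt σ m.unpair.2.unpair.2 = m.unpair.1 + 1)) false)
          false)
    false

theorem DB_eq_true_iff {m v : ℕ} : DB m v = true ↔
    v = 1 ∧ ∃ σ, Encodable.decode (α := List Bool) m.unpair.2.unpair.1 = some σ ∧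
      m.unpair.2.unpair.2 < σ.length ∧ σ.getD m.unpair.2.unpair.2 false = true ∧
      cnt σ m.unpair.2.unpair.2 = m.unpair.1 + 1 := by
  rw [DB]
  cases hd : Encodable.decode (α := List Bool) m.unpair.2.unpair.1 with
  | none =>
    simp only [Option.casesOn]
    constructor
    · intro h
      cases hv : decide (v = 1) <;> rw [hv] at h <;> exact Bool.noConfusion h
    · rintro ⟨-, σ, hσ, -⟩
      cases hσ
  | some σ =>
    simp only [Option.casesOn]
    constructor
    · intro h
      cases hv : decide (v = 1) <;> rw [hv] at h
      · exact Bool.noConfusion h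
      · refine ⟨of_decide_eq_true hv, σ, rfl, ?_⟩
        cases h1 : decide (m.unpair.2.unpair.2 < σ.length) <;> rw [h1] at h
        · exact Bool.noConfusion h
        · cases h2 : σ.getD m.unpair.2.unpair.2 false <;> rw [h2] at h
          · exact Bool.noConfusion h
          · exact ⟨of_decide_eq_true h1, rfl, of_decide_eq_true h⟩
    · rintro ⟨hv, σ', hσ', hlt, hgd, hcnt⟩
      cases Option.some.inj hσ'
      rw [decide_eq_true hv, decide_eq_true hlt, hgd, decide_eq_true hcnt]
      rfl

theorem DB_computable : Computable₂ DB := by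
  have hk : Computable fun q : ℕ × ℕ => q.1.unpair.2 :=
    Computable.snd.comp (Computable.unpair.comp Computable.fst)
  have ha : Computable fun q : ℕ × ℕ => q.1.unpair.2.unpair.1 :=
    Computable.fst.comp (Computable.unpair.comp hk)
  have hp : Computable fun q : ℕ × ℕ => q.1.unpair.2.unpair.2 :=
    Computable.snd.comp (Computable.unpair.comp hk)
  have he : Computable fun q : ℕ × ℕ => q.1.unpair.1 :=
    Computable.fst.comp (Computable.unpair.comp Computable.fst)
  have hdec : Computable fun q : ℕ × ℕ =>
      Encodable.decode (α := List Bool) q.1.unpair.2.unpair.1 :=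
    Computable.decode.comp ha
  have hv1 : Computable fun q : ℕ × ℕ => decide (q.2 = 1) :=
    (Primrec.eq.comp Primrec.snd (Primrec.const 1)).decide.to_comp
  have hinner : Computable₂ fun (q : ℕ × ℕ) (σ : List Bool) =>
      cond (decide (q.1.unpair.2.unpair.2 < σ.length))
        (cond (σ.getD q.1.unpair.2.unpair.2 false)
          (decide (cnt σ q.1.unpair.2.unpair.2 = q.1.unpair.1 + 1)) false)
        false := by
    have c1 : Computable fun r : (ℕ × ℕ) × List Bool =>
        decide (r.1.1.unpair.2.unpair.2 < r.2.length) :=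
      Primrec.nat_lt.decide.to_comp.comp (hp.comp Computable.fst)
        (Computable.list_length.comp Computable.snd)
    have c2 : Computable fun r : (ℕ × ℕ) × List Bool =>
        r.2.getD r.1.1.unpair.2.unpair.2 false :=
      (Primrec.list_getD false).to_comp.comp Computable.snd (hp.comp Computable.fst)
    have c3 : Computable fun r : (ℕ × ℕ) × List Bool =>
        decide (cnt r.2 r.1.1.unpair.2.unpair.2 = r.1.1.unpair.1 + 1) :=
      Primrec.eq.decide.to_comp.comp
        (cnt_computable.comp Computable.snd (hp.comp Computable.fst))
        (Computable.succ.comp (he.comp Computable.fst))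
    exact (Computable.cond c1 (Computable.cond c2 c3 (Computable.const false))
      (Computable.const false)).to₂
  have : Computable fun q : ℕ × ℕ =>
      cond (decide (q.2 = 1))
        ((Encodable.decode (α := List Bool) q.1.unpair.2.unpair.1).casesOn
          (motive := fun _ => Bool) false fun σ =>
            cond (decide (q.1.unpair.2.unpair.2 < σ.length))
              (cond (σ.getD q.1.unpair.2.unpair.2 false)
                (decide (cnt σ q.1.unpair.2.unpair.2 = q.1.unpair.1 + 1)) false)
              false)
        false :=
    Computable.cond hv1
      (Computable.option_casesOn hdec (Computable.const false) hinner)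
      (Computable.const false)
  exact this.to₂

/-- Decoding step applied to the rfind result. -/
def ansF (m : ℕ) : ℕ := cond (haltsB m.unpair.1 m.unpair.2.unpair.2) 1 0

theorem ansF_computable : Computable ansF := by
  have h1 : Computable fun m : ℕ => haltsB m.unpair.1 m.unpair.2.unpair.2 :=
    haltsB_computable.comp (Computable.fst.comp Computable.unpair)
      (Computable.snd.comp (Computable.unpair.comp
        (Computable.snd.comp Computable.unpair)))
  exact Computable.cond h1 (Computable.const 1) (Computable.const 0)

/-- The oracle-free outer function of the search step. -/
def selF (q : ℕ) : ℕ := cond (DB q.unpair.1 q.unpair.2) 0 1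

theorem selF_computable : Computable selF :=
  Computable.cond (DB_computable.comp (Computable.fst.comp Computable.unpair)
    (Computable.snd.comp Computable.unpair)) (Computable.const 0) (Computable.const 1)

theorem of_computable {O : ℕ →. ℕ} {f : ℕ → ℕ} (hf : Computable f) :
    RecInO O (↑f : ℕ →. ℕ) :=
  RecInO.of_partrec (Partrec.nat_iff.1 hf)

theorem decide_cond_eq (b : Bool) : decide (cond b 0 1 = 0) = b := by
  cases b <;> simp

theorem reduction {P : Set (List Bool)} (hPt : IsTree P) (hPT : P ⊆ TT)
    (hperf : IsPerfectTree P) : TuringLE (jump fun _ => 0) (chi P) := by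
  set O : ℕ →. ℕ := fun x => Part.some (chi P x) with hO
  have hproj : Computable fun m : ℕ => m.unpair.2.unpair.1 :=
    Computable.fst.comp (Computable.unpair.comp (Computable.snd.comp Computable.unpair))
  have horacle : RecInO O fun m : ℕ =>
      (↑(fun m : ℕ => m.unpair.2.unpair.1) : ℕ →. ℕ) m >>= O :=
    RecInO.comp RecInO.oracle (of_computable hproj)
  have hid : RecInO O (↑(fun m : ℕ => m) : ℕ →. ℕ) := of_computable Computable.id
  have hpairc : RecInO O fun m : ℕ =>
      Nat.pair <$> (↑(fun m : ℕ => m) : ℕ →. ℕ) m <*>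
        ((↑(fun m : ℕ => m.unpair.2.unpair.1) : ℕ →. ℕ) m >>= O) :=
    RecInO.pair hid horacle
  have hsel : RecInO O fun m : ℕ =>
      (Nat.pair <$> (↑(fun m : ℕ => m) : ℕ →. ℕ) m <*>
        ((↑(fun m : ℕ => m.unpair.2.unpair.1) : ℕ →. ℕ) m >>= O)) >>=
          (↑selF : ℕ →. ℕ) :=
    RecInO.comp (of_computable selF_computable) hpairc
  have hinner : RecInO O fun m : ℕ =>
      (Part.some (selF (Nat.pair m (chi P m.unpair.2.unpair.1))) : Part ℕ) :=
    hsel.of_eq fun m => by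
      simp [hO, Seq.seq, PFun.lift]
      exact Part.bind_some _ _
  have hrf := hinner.rfind
  have hF : RecInO O fun e : ℕ =>
      (Nat.pair <$> (↑(fun m : ℕ => m) : ℕ →. ℕ) e <*>
        (Nat.rfind fun n => (fun m : ℕ => decide (m = 0)) <$>
          (Part.some (selF (Nat.pair (Nat.pair e n)
            (chi P (Nat.pair e n).unpair.2.unpair.1))) : Part ℕ))) >>=
        (↑ansF : ℕ →. ℕ) :=
    RecInO.comp (of_computable ansF_computable) (RecInO.pair hid hrf)
  obtain ⟨c, hc⟩ := hF.exists_codeo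
  refine ⟨c, fun e => ?_⟩
  rw [hc]
  beta_reduce
  -- analysis of the search
  set q : ℕ → Bool := fun k => DB (Nat.pair e k) (chi P k.unpair.1) with hq
  have hpred : ∀ k, ((fun m : ℕ => decide (m = 0)) <$>
      (Part.some (selF (Nat.pair (Nat.pair e k)
        (chi P (Nat.pair e k).unpair.2.unpair.1))) : Part ℕ)) = Part.some (q k) := by
    intro k
    have hmap : ((fun m : ℕ => decide (m = 0)) <$>
        (Part.some (selF (Nat.pair (Nat.pair e k)
          (chi P (Nat.pair e k).unpair.2.unpair.1))) : Part ℕ)) =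
        Part.some (decide (selF (Nat.pair (Nat.pair e k)
          (chi P (Nat.pair e k).unpair.2.unpair.1)) = 0)) := rfl
    rw [hmap]
    congr 1
    simp only [hq, Nat.unpair_pair, selF]
    exact decide_cond_eq _
  -- existence of a witness
  have hex : ∃ k, q k = true := by
    obtain ⟨τ, hτ, hones⟩ := perfect_many_ones hPt hperf (e + 2)
    obtain ⟨p, hpl, hgd, hcnt⟩ := cnt_pos_exists (τ := τ) (L := τ.length) (m := e + 1) (by omega)
    refine ⟨Nat.pair (Encodable.encode τ) p, ?_⟩
    rw [hq]
    simp only [Nat.unpair_pair]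
    rw [DB_eq_true_iff]
    simp only [Nat.unpair_pair]
    exact ⟨chi_encode_mem hτ, τ, Encodable.encodek τ, hpl, hgd, hcnt⟩
  set k₀ := Nat.find hex with hk₀
  have hq₀ : q k₀ = true := Nat.find_spec hex
  have hrfind : (Nat.rfind fun n => (fun m : ℕ => decide (m = 0)) <$>
      (Part.some (selF (Nat.pair (Nat.pair e n)
        (chi P (Nat.pair e n).unpair.2.unpair.1))) : Part ℕ)) = Part.some k₀ := by
    apply Part.eq_some_iff.2
    refine Nat.mem_rfind.2 ?_
    constructor
    · rw [hpred k₀, Part.mem_some_iff]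
      exact hq₀.symm
    · intro m hm
      rw [hpred m, Part.mem_some_iff]
      have := Nat.find_min hex hm
      cases hqm : q m with
      | false => rfl
      | true => exact absurd hqm this
  rw [hrfind]
  have hval : (Nat.pair <$> (↑(fun m : ℕ => m) : ℕ →. ℕ) e <*>
      (Part.some k₀ : Part ℕ)) >>= (↑ansF : ℕ →. ℕ) =
      Part.some (ansF (Nat.pair e k₀)) := by
    simp [Seq.seq, PFun.lift]
    exact Part.bind_some _ _
  rw [hval]
  -- correctness of the answer
  rw [hq] at hq₀
  rw [DB_eq_true_iff] at hq₀
  simp only [Nat.unpair_pair] at hq₀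
  obtain ⟨hchi, σ, hdec, hplen, hgd, hcnt⟩ := hq₀
  obtain ⟨σ', hdec', hσP⟩ := chi_eq_one_iff.1 hchi
  rw [hdec] at hdec'
  cases Option.some.inj hdec'
  set p₀ := k₀.unpair.2 with hp₀
  have key : ((cdE e).eval e).Dom ↔ haltsB e p₀ = true := by
    constructor
    · intro hdom
      obtain ⟨s, hs⟩ := haltsB_complete hdom
      obtain ⟨τ', hτ'P, hpre, hlen⟩ := perfect_long_ext hperf hσP s
      have hτ'T : okB τ' = true := hPT hτ'P
      rw [okB_iff] at hτ'T
      have hp₀' : p₀ < τ'.length := lt_of_lt_of_le hplen hpre.length_le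
      have hgd' : τ'.getD p₀ false = true := by
        rw [← prefix_getD hpre hplen]; exact hgd
      have hcnt' : cnt τ' p₀ = e + 1 := by
        rw [← cnt_prefix hpre p₀ (le_of_lt hplen)]; exact hcnt
      exact hτ'T p₀ hp₀' hgd' e (by omega) (haltsB_mono hlen hs)
    · exact haltsB_sound
  rw [jump_zero_eq]
  rw [ansF]
  simp only [Nat.unpair_pair]
  cases hb : haltsB e p₀ with
  | true => rw [if_pos (key.2 hb)]; rfl
  | false =>
    rw [if_neg (fun hd => by rw [key.1 hd] at hb; exact Bool.noConfusion hb)]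
    rfl

end S8

/-- There is a computable binary tree `T` whose path set is a (nonempty) perfect subset
of Cantor space, such that every perfect subtree of `T` computes the halting problem
`∅′ = jump (fun _ => 0)`. -/
theorem stmt8 :
    ∃ T : Set (List Bool), IsTree T ∧ ComputableInZero (chi T) ∧
      Perfect (paths T) ∧ (paths T).Nonempty ∧
      ∀ P : Set (List Bool), IsTree P → P ⊆ T → IsPerfectTree P →
        TuringLE (jump fun _ => 0) (chi P) :=
  ⟨S8.TT, S8.TT_isTree, S8.computableInZero_of_computable S8.chiTT_computable,
    S8.paths_TT_perfect, S8.paths_TT_nonempty,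
    fun _P hPt hPT hperf => S8.reduction hPt hPT hperf⟩
end

section
/- Let f: 2^{<ω} → {0,…,k−1} be a finite coloring of the full binary tree and suppose i < k is a color such that the set A = {X ∈ 2^ω : ∀m ∃n > m, f(X↾n) = i} has positive outer measure. If P is a perfect tree with [P] ⊆ A, then the set {τ ∈ P : f(τ) = i} contains a perfect subtree; in particular there exists an f-homogeneous perfect tree with color i. -/
open MeasureTheory

-- small facts
lemma getD_of_prefix {a b : List Bool} (h : a <+: b) {n : ℕ} (hn : n < a.length) :
    a.getD n false = b.getD n false := by
  obtain ⟨t, rfl⟩ := h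
  rw [List.getD_eq_getElem _ _ hn, List.getD_eq_getElem _ _ (by simp; omega),
    List.getElem_append_left hn]

lemma step1 {P : Set (List Bool)} (hP : IsTree P) (hperf : IsPerfectTree P)
    {σ : List Bool} (hσ : σ ∈ P) : ∃ b, σ ++ [b] ∈ P := by
  obtain ⟨τ₀, h₀, τ₁, h₁, hp₀, hp₁, hi₀, hi₁⟩ := hperf.2 σ hσ
  obtain ⟨v, rfl⟩ := hp₀
  cases v with
  | nil => simp at hi₀; exact absurd hp₁ hi₀
  | cons b v' =>
    exact ⟨b, hP _ h₀ _ ⟨v', by simp⟩⟩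

lemma exists_ext {k : ℕ} (f : List Bool → Fin k) (i : Fin k) {P : Set (List Bool)}
    (hP : IsTree P) (hperf : IsPerfectTree P)
    (hPA : paths P ⊆ {X : ℕ → Bool | ∀ m, ∃ n > m, f (initSeg X n) = i})
    {σ : List Bool} (hσ : σ ∈ P) :
    ∃ τ ∈ P, σ <+: τ ∧ σ.length < τ.length ∧ f τ = i := by
  classical
  set nxt : List Bool → Bool := fun ρ => if h : ρ ∈ P then (step1 hP hperf h).choose else false
    with hnxtdef
  have hnxt : ∀ ρ ∈ P, ρ ++ [nxt ρ] ∈ P := by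
    intro ρ h
    simp only [hnxtdef, dif_pos h]
    exact (step1 hP hperf h).choose_spec
  set c : ℕ → List Bool := fun n => Nat.rec σ (fun _ ρ => ρ ++ [nxt ρ]) n with hcdef
  have hcs : ∀ n, c (n + 1) = c n ++ [nxt (c n)] := fun n => rfl
  have hcP : ∀ n, c n ∈ P := by
    intro n; induction n with
    | zero => exact hσ
    | succ n ih => rw [hcs]; exact hnxt _ ih
  have hclen : ∀ n, (c n).length = σ.length + n := by
    intro n; induction n with
    | zero => rfl
    | succ n ih => rw [hcs]; simp [ih]; omega
  have hmono : ∀ m n, m ≤ n → c m <+: c n := by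
    intro m n h
    induction n with
    | zero =>
      have : m = 0 := Nat.le_zero.mp h
      subst this; exact List.prefix_refl _
    | succ n ih =>
      rcases Nat.lt_or_ge m (n+1) with h' | h'
      · exact (ih (by omega)).trans (by rw [hcs]; exact List.prefix_append _ _)
      · have : m = n + 1 := by omega
        subst this; exact List.prefix_refl _
  set X : ℕ → Bool := fun n => (c (n+1)).getD n false with hXdef
  have hX : ∀ m n, n < (c m).length → X n = (c m).getD n false := by
    intro m n hn
    rcases le_total (n+1) m with h | h
    · exact getD_of_prefix (hmono _ _ h) (by have := hclen (n+1); omega)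
    · exact (getD_of_prefix (hmono _ _ h) hn).symm
  have hinit : ∀ m, initSeg X m = (c m).take m := by
    intro m
    apply List.ext_getElem
    · simp [initSeg, hclen]
    · intro j h1 h2
      have hj : j < m := by simpa [initSeg] using h1
      have hjc : j < (c m).length := by rw [hclen]; omega
      simp only [initSeg, List.getElem_ofFn, List.getElem_take]
      rw [hX m j hjc, List.getD_eq_getElem _ _ hjc]
  have hXp : X ∈ paths P := by
    intro m
    rw [hinit]
    exact hP (c m) (hcP m) _ (List.take_prefix m (c m))
  obtain ⟨n, hn, hf⟩ := hPA hXp σ.length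
  refine ⟨initSeg X n, hXp n, ?_, ?_, hf⟩
  · rw [hinit]
    have h0 : σ <+: c n := hmono 0 n (by omega)
    have := List.prefix_iff_eq_take.mp h0
    rw [this]
    exact List.take_prefix_take_left (le_of_lt hn)
  · simp [initSeg]; omega

lemma branch {k : ℕ} (f : List Bool → Fin k) (i : Fin k) {P : Set (List Bool)}
    (hP : IsTree P) (hperf : IsPerfectTree P)
    (hPA : paths P ⊆ {X : ℕ → Bool | ∀ m, ∃ n > m, f (initSeg X n) = i})
    {σ : List Bool} (hσ : σ ∈ P) :
    ∃ g : Bool → List Bool,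
      (∀ b, g b ∈ P ∧ σ <+: g b ∧ σ.length < (g b).length ∧ f (g b) = i) ∧
      (∀ b c, b ≠ c → ¬ g b <+: g c) := by
  obtain ⟨υ₀, h₀, υ₁, h₁, hp₀, hp₁, hi₀, hi₁⟩ := hperf.2 σ hσ
  obtain ⟨τ₀, hτ₀P, hτ₀p, hτ₀l, hτ₀f⟩ := exists_ext f i hP hperf hPA h₀
  obtain ⟨τ₁, hτ₁P, hτ₁p, hτ₁l, hτ₁f⟩ := exists_ext f i hP hperf hPA h₁
  refine ⟨fun b => bif b then τ₁ else τ₀, ?_, ?_⟩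
  · intro b
    cases b
    · exact ⟨hτ₀P, hp₀.trans hτ₀p, lt_of_le_of_lt hp₀.length_le hτ₀l, hτ₀f⟩
    · exact ⟨hτ₁P, hp₁.trans hτ₁p, lt_of_le_of_lt hp₁.length_le hτ₁l, hτ₁f⟩
  · intro b c hbc h
    have key : ∀ w : List Bool, υ₀ <+: w → υ₁ <+: w → False := fun w ha hb =>
      (List.prefix_or_prefix_of_prefix ha hb).elim hi₀ hi₁
    cases b <;> cases c
    · exact hbc rfl
    · exact key τ₁ (hτ₀p.trans (by simpa using h)) hτ₁p
    · exact key τ₀ hτ₀p (hτ₁p.trans (by simpa using h))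
    · exact hbc rfl

lemma common_split : ∀ (σ τ : List Bool), ¬ σ <+: τ → ¬ τ <+: σ →
    ∃ u b c s t, b ≠ c ∧ σ = u ++ b :: s ∧ τ = u ++ c :: t := by
  intro σ
  induction σ with
  | nil => intro τ h1 _; exact absurd (List.nil_prefix) h1
  | cons x σ' ih =>
    intro τ h1 h2
    cases τ with
    | nil => exact absurd List.nil_prefix h2
    | cons y τ' =>
      by_cases hxy : x = y
      · subst hxy
        obtain ⟨u, b, c, s, t, hbc, hs, ht⟩ := ih τ'
          (fun h => h1 (List.cons_prefix_cons.mpr ⟨rfl, h⟩))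
          (fun h => h2 (List.cons_prefix_cons.mpr ⟨rfl, h⟩))
        exact ⟨x :: u, b, c, s, t, hbc, by rw [hs]; rfl, by rw [ht]; rfl⟩
      · exact ⟨[], x, y, σ', τ', hxy, rfl, rfl⟩

lemma embed_of_step {k : ℕ} (f : List Bool → Fin k) (i : Fin k) (P : Set (List Bool))
    (ρ : List Bool) (hρ : ρ ∈ P) (hρf : f ρ = i)
    (step : List Bool → Bool → List Bool)
    (hstepP : ∀ σ ∈ P, ∀ b, step σ b ∈ P ∧ σ <+: step σ b ∧ σ.length < (step σ b).length
      ∧ f (step σ b) = i)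
    (hstepInc : ∀ σ ∈ P, ∀ b c, b ≠ c → ¬ step σ b <+: step σ c) :
    ∃ e : List Bool → List Bool, (∀ σ, e σ ∈ P ∧ f (e σ) = i) ∧
      ∀ σ τ : List Bool, (σ <+: τ ↔ e σ <+: e τ) := by
  set e : List Bool → List Bool := fun σ => List.foldl step ρ σ with hedef
  have hfold : ∀ (u ρ' : List Bool), ρ' ∈ P →
      (List.foldl step ρ' u ∈ P ∧ ρ' <+: List.foldl step ρ' u ∧
        ρ'.length + u.length ≤ (List.foldl step ρ' u).length) := by
    intro u
    induction u with
    | nil => intro ρ' h; exact ⟨h, List.prefix_refl _, by simp⟩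
    | cons b u ih =>
      intro ρ' h
      obtain ⟨hs1, hs2, hs3, _⟩ := hstepP ρ' h b
      obtain ⟨h1, h2, h3⟩ := ih (step ρ' b) hs1
      refine ⟨h1, hs2.trans h2, ?_⟩
      simp only [List.foldl_cons, List.length_cons]
      omega
  have hfoldf : ∀ (u ρ' : List Bool), ρ' ∈ P → f ρ' = i →
      f (List.foldl step ρ' u) = i := by
    intro u
    induction u with
    | nil => intro ρ' _ h; exact h
    | cons b u ih =>
      intro ρ' h hf
      obtain ⟨hs1, _, _, hs4⟩ := hstepP ρ' h b
      exact ih (step ρ' b) hs1 hs4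
  have heP : ∀ σ, e σ ∈ P := fun σ => (hfold σ ρ hρ).1
  have hef : ∀ σ, f (e σ) = i := fun σ => hfoldf σ ρ hρ hρf
  have heapp : ∀ σ u, e (σ ++ u) = List.foldl step (e σ) u := by
    intro σ u; simp [hedef, List.foldl_append]
  have emono : ∀ σ u, e σ <+: e (σ ++ u) := by
    intro σ u; rw [heapp]; exact (hfold u _ (heP σ)).2.1
  have elen : ∀ σ u, u ≠ [] → (e σ).length < (e (σ ++ u)).length := by
    intro σ u hu
    have := (hfold u _ (heP σ)).2.2
    rw [heapp]
    have : 1 ≤ u.length := List.length_pos_iff.mpr hu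
    have h2 := (hfold u _ (heP σ)).2.2
    omega
  refine ⟨e, fun σ => ⟨heP σ, hef σ⟩, fun σ τ => ⟨?_, ?_⟩⟩
  · rintro ⟨u, rfl⟩; exact emono σ u
  · intro h
    by_contra hn
    by_cases hts : τ <+: σ
    · obtain ⟨u, rfl⟩ := hts
      have hu : u ≠ [] := by rintro rfl; exact hn (by simp)
      have := elen τ u hu
      have := h.length_le
      omega
    · obtain ⟨u, b, c, s, t, hbc, hσeq, hτeq⟩ := common_split σ τ hn hts
      have h1 : e (u ++ [b]) <+: e σ := by
        rw [hσeq, show u ++ b :: s = (u ++ [b]) ++ s by simp]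
        exact emono _ s
      have h2 : e (u ++ [c]) <+: e τ := by
        rw [hτeq, show u ++ c :: t = (u ++ [c]) ++ t by simp]
        exact emono _ t
      have hb : e (u ++ [b]) = step (e u) b := by rw [heapp]; rfl
      have hc : e (u ++ [c]) = step (e u) c := by rw [heapp]; rfl
      have hcomp := List.prefix_or_prefix_of_prefix (h1.trans h) h2
      rw [hb, hc] at hcomp
      rcases hcomp with h' | h'
      · exact hstepInc (e u) (heP u) b c hbc h'
      · exact hstepInc (e u) (heP u) c b (Ne.symm hbc) h'

theorem stmt17' {k : ℕ} (f : List Bool → Fin k) (i : Fin k)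
    (P : Set (List Bool)) (hP : IsTree P) (hperf : IsPerfectTree P)
    (hPA : paths P ⊆ {X : ℕ → Bool | ∀ m, ∃ n > m, f (initSeg X n) = i}) :
    ∃ e : List Bool → List Bool, (∀ σ, e σ ∈ P ∧ f (e σ) = i) ∧
      ∀ σ τ : List Bool, (σ <+: τ ↔ e σ <+: e τ) := by
  classical
  obtain ⟨σ₀, hσ₀⟩ := hperf.1
  have hnil : ([] : List Bool) ∈ P := hP σ₀ hσ₀ [] List.nil_prefix
  obtain ⟨ρ, hρP, _, _, hρf⟩ := exists_ext f i hP hperf hPA hnil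
  set step : List Bool → Bool → List Bool :=
    fun σ b => if h : σ ∈ P then (branch f i hP hperf hPA h).choose b else σ with hstepdef
  have hstepP : ∀ σ ∈ P, ∀ b, step σ b ∈ P ∧ σ <+: step σ b ∧ σ.length < (step σ b).length
      ∧ f (step σ b) = i := by
    intro σ h b
    simp only [hstepdef, dif_pos h]
    exact (branch f i hP hperf hPA h).choose_spec.1 b
  have hstepInc : ∀ σ ∈ P, ∀ b c, b ≠ c → ¬ step σ b <+: step σ c := by
    intro σ h b c hbc
    simp only [hstepdef, dif_pos h]
    exact (branch f i hP hperf hPA h).choose_spec.2 b c hbc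
  exact embed_of_step f i P ρ hρP hρf step hstepP hstepInc


/-- If `A = {X : color i appears infinitely often along X}` has positive outer measure and
`P` is a perfect tree with `[P] ⊆ A`, then `{τ ∈ P : f τ = i}` contains a perfect subtree:
there is an embedded copy of `2^{<ω}` inside `P` on which `f` is constantly `i`. -/
theorem stmt17 (μ : Measure (ℕ → Bool)) (hμ : UniformOnCantor μ)
    (k : ℕ) (f : List Bool → Fin k) (i : Fin k)
    (hA : 0 < μ {X : ℕ → Bool | ∀ m, ∃ n > m, f (initSeg X n) = i})
    (P : Set (List Bool)) (hP : IsTree P) (hperf : IsPerfectTree P)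
    (hPA : paths P ⊆ {X : ℕ → Bool | ∀ m, ∃ n > m, f (initSeg X n) = i}) :
    ∃ e : List Bool → List Bool, (∀ σ, e σ ∈ P ∧ f (e σ) = i) ∧
      ∀ σ τ : List Bool, (σ <+: τ ↔ e σ <+: e τ) := by
  exact stmt17' f i P hP hperf hPA
end
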